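/- arXiv:1108.2403 — 5 statements merged into one kernel-verified Lean document; each statement's English description precedes it below -/
import Mathlib

section
/- Let G be a finitely L-presented group and let U be a subgroup of G of finite index. Then U is finitely L-presented. -/
/-- The kernel of a finite `L`-presentation: the normal closure in the free group of
`Q ∪ ⋃_{σ ∈ Φ*} σ(R)`, where `Φ*` is the submonoid of `End(F)` generated by `Φ`. -/
def lpresKernel {X : Type} (Q R : Set (FreeGroup X))
    (Φ : Set (Monoid.End (FreeGroup X))) : Subgroup (FreeGroup X) :=
  Subgroup.normalClosure (Q ∪ ⋃ σ ∈ Submonoid.closure Φ, ⇑σ '' R)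

instance lpresKernel_normal {X : Type} (Q R : Set (FreeGroup X))
    (Φ : Set (Monoid.End (FreeGroup X))) : (lpresKernel Q R Φ).Normal :=
  Subgroup.normalClosure_normal

/-- A group is finitely `L`-presented if it is isomorphic to the group presented by a
finite `L`-presentation `(X, Q, Φ, R)`. -/
def IsFinitelyLPresented (G : Type*) [Group G] : Prop :=
  ∃ (n : ℕ) (Q R : Finset (FreeGroup (Fin n)))
    (Φ : Finset (Monoid.End (FreeGroup (Fin n)))),
    Nonempty (G ≃* FreeGroup (Fin n) ⧸ lpresKernel (Q : Set _) (R : Set _) (Φ : Set _))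

/-- A group is invariantly finitely `L`-presented if it admits a finite `L`-presentation
`(X, Q, Φ, R)` such that each `σ ∈ Φ` leaves the kernel `N` invariant. -/
def IsInvariantlyFinitelyLPresented (G : Type*) [Group G] : Prop :=
  ∃ (n : ℕ) (Q R : Finset (FreeGroup (Fin n)))
    (Φ : Finset (Monoid.End (FreeGroup (Fin n)))),
    (∀ σ ∈ Φ, ∀ g ∈ lpresKernel (Q : Set _) (R : Set _) (Φ : Set _),
        σ g ∈ lpresKernel (Q : Set _) (R : Set _) (Φ : Set _)) ∧
    Nonempty (G ≃* FreeGroup (Fin n) ⧸ lpresKernel (Q : Set _) (R : Set _) (Φ : Set _))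

open Subgroup

section Auxiliary

/-- A finitely generated free group has finitely many basis generators. -/
theorem finite_generators_of_fg (G : Type) [Group G] [IsFreeGroup G] [Group.FG G] :
    Finite (IsFreeGroup.Generators G) := by
  set B := IsFreeGroup.Generators G
  let h : G →* Multiplicative (B →₀ ℤ) :=
    IsFreeGroup.lift (fun b => Multiplicative.ofAdd (Finsupp.single b 1))
  have hsingle : ∀ (a : B) (z : ℤ),
      Multiplicative.ofAdd (Finsupp.single a z) ∈ h.range := by
    intro a z
    refine ⟨IsFreeGroup.of a ^ z, ?_⟩
    rw [map_zpow, IsFreeGroup.lift_of]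
    rw [← ofAdd_zsmul, Finsupp.smul_single, smul_eq_mul, mul_one]
  have hsurj : Function.Surjective h := by
    intro f
    have : Multiplicative.toAdd f ∈ (⊤ : Set (B →₀ ℤ)) := trivial
    suffices hmem : Multiplicative.ofAdd (Multiplicative.toAdd f) ∈ h.range by
      simpa using hmem
    induction (Multiplicative.toAdd f) using Finsupp.induction with
    | zero => exact ⟨1, map_one h⟩
    | single_add a b f _ _ ih =>
      have : Multiplicative.ofAdd (Finsupp.single a b + f)
          = Multiplicative.ofAdd (Finsupp.single a b) * Multiplicative.ofAdd f := rfl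
      rw [this]
      exact mul_mem (hsingle a b) ih
  have h1 : Group.FG (Multiplicative (B →₀ ℤ)) := Group.fg_of_surjective hsurj
  have h2 : AddGroup.FG (B →₀ ℤ) := AddGroup.fg_iff_mul_fg.mpr h1
  have h3 : Module.Finite ℤ (B →₀ ℤ) := Module.Finite.iff_addGroup_fg.mpr h2
  exact Module.Finite.finite_basis (Finsupp.basisSingleOne (R := ℤ) (ι := B))


instance finite_freeGroup_hom (n : ℕ) (M : Type*) [Group M] [Finite M] :
    Finite (FreeGroup (Fin n) →* M) := by
  refine Finite.of_injective (fun φ => (φ ∘ FreeGroup.of : Fin n → M)) ?_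
  intro φ ψ hfg
  refine FreeGroup.ext_hom φ ψ (fun a => ?_)
  exact congrFun hfg a

/-- There are finitely many subgroups of index at most `k` in a finitely generated free group. -/
theorem finite_subgroups_of_index_le (n k : ℕ) :
    Finite {W : Subgroup (FreeGroup (Fin n)) // W.index ≤ k ∧ W.FiniteIndex} := by
  set F := FreeGroup (Fin n)
  have hcard : ∀ W : {W : Subgroup F // W.index ≤ k ∧ W.FiniteIndex},
      Nonempty ((F ⧸ W.1) ↪ Fin k) := by
    rintro ⟨W, hWk, hWfi⟩
    haveI : Finite (F ⧸ W) := W.finite_quotient_of_finiteIndex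
    have e := Finite.equivFin (F ⧸ W)
    have hle : Nat.card (F ⧸ W) ≤ k := by
      have : Nat.card (F ⧸ W) = W.index := rfl
      omega
    exact ⟨e.toEmbedding.trans (Fin.castLEEmb hle)⟩
  classical
  set emb : ∀ W : {W : Subgroup F // W.index ≤ k ∧ W.FiniteIndex}, (F ⧸ W.1) ↪ Fin k :=
    fun W => (hcard W).some with hemb
  set Ψ : {W : Subgroup F // W.index ≤ k ∧ W.FiniteIndex} →
      (F →* Equiv.Perm (Fin k)) × Fin k :=
    fun W => ⟨(Equiv.Perm.viaEmbeddingHom (emb W)).comp (MulAction.toPermHom F (F ⧸ W.1)),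
      emb W ((1 : F) : F ⧸ W.1)⟩
  have hsmul : ∀ (W : Subgroup F) (f : F), f • ((1 : F) : F ⧸ W) = ((f : F) : F ⧸ W) := by
    intro W f
    rw [MulAction.Quotient.smul_mk, smul_eq_mul, mul_one]
  have hkey : ∀ (W : {W : Subgroup F // W.index ≤ k ∧ W.FiniteIndex}) (f : F),
      f ∈ W.1 ↔ (Ψ W).1 f (Ψ W).2 = (Ψ W).2 := by
    intro W f
    have h1 : (Ψ W).1 f (Ψ W).2 = emb W (f • ((1 : F) : F ⧸ W.1)) := by
      simp only [Ψ, MonoidHom.comp_apply, Equiv.Perm.viaEmbeddingHom_apply]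
      rw [Equiv.Perm.viaEmbedding_apply]
      rfl
    rw [h1, hsmul]
    have h2 : (((f : F) : F ⧸ W.1) = ((1 : F) : F ⧸ W.1)) ↔ f ∈ W.1 := by
      rw [QuotientGroup.eq]
      simp
      exact inv_mem_iff
    constructor
    · intro hf
      exact congrArg (emb W) (h2.mpr hf)
    · intro hf
      exact h2.mp ((emb W).injective hf)
  refine Finite.of_injective Ψ ?_
  intro W₁ W₂ h
  ext f
  rw [hkey W₁ f, hkey W₂ f, h]


instance freeGroup_fg (n : ℕ) : Group.FG (FreeGroup (Fin n)) :=
  Group.fg_iff.mpr ⟨Set.range FreeGroup.of, FreeGroup.closure_range_of _, Set.finite_range _⟩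

theorem index_comap_le {G H : Type*} [Group G] [Group H] (f : G →* H) (W : Subgroup H)
    (hW : W.FiniteIndex) : (W.comap f).index ≤ W.index ∧ (W.comap f).FiniteIndex := by
  haveI := hW
  haveI : Finite (H ⧸ W) := W.finite_quotient_of_finiteIndex
  set ψ : G ⧸ W.comap f → H ⧸ W := fun x => Quotient.liftOn' x (fun g => ((f g : H) : H ⧸ W))
    (by
      intro a b hab
      rw [QuotientGroup.leftRel_apply] at hab
      apply Quotient.sound'
      rw [QuotientGroup.leftRel_apply]
      simpa using hab) with hψ
  have hψmk : ∀ g : G, ψ ((g : G) : G ⧸ W.comap f) = ((f g : H) : H ⧸ W) := fun g => rfl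
  have hinj : Function.Injective ψ := by
    intro x y
    induction x using QuotientGroup.induction_on with
    | H a =>
    induction y using QuotientGroup.induction_on with
    | H b =>
    intro hxy
    rw [hψmk, hψmk] at hxy
    rw [QuotientGroup.eq] at hxy ⊢
    simpa using hxy
  have hfin : Finite (G ⧸ W.comap f) := Finite.of_injective ψ hinj
  constructor
  · exact Nat.card_le_card_of_injective ψ hinj
  · exact Subgroup.finiteIndex_of_finite_quotient

/-- Conjugation of monoid endomorphisms by a `MulEquiv`, as a monoid homomorphism. -/
def endCongrHom {A B : Type*} [Monoid A] [Monoid B] (c : A ≃* B) :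
    Monoid.End A →* Monoid.End B where
  toFun σ := ((c.toMonoidHom.comp σ).comp c.symm.toMonoidHom : Monoid.End B)
  map_one' := by
    refine MonoidHom.ext fun x => ?_
    show c ((1 : Monoid.End A) (c.symm x)) = (1 : Monoid.End B) x
    show c (c.symm x) = x
    simp
  map_mul' σ τ := by
    refine MonoidHom.ext fun x => ?_
    show c ((σ * τ) (c.symm x)) = _
    show c (σ (τ (c.symm x))) = c (σ (c.symm (c (τ (c.symm x)))))
    simp

theorem endCongrHom_apply {A B : Type*} [Monoid A] [Monoid B] (c : A ≃* B)
    (σ : Monoid.End A) (x : B) : endCongrHom c σ x = c (σ (c.symm x)) := rfl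

theorem isFinitelyLPresented_of_finite {Y : Type} [Finite Y] {H : Type*} [Group H]
    (Qs Rs : Set (FreeGroup Y)) (Φs : Set (Monoid.End (FreeGroup Y)))
    (hQ : Qs.Finite) (hR : Rs.Finite) (hΦ : Φs.Finite)
    (e : H ≃* FreeGroup Y ⧸ lpresKernel Qs Rs Φs) : IsFinitelyLPresented H := by
  classical
  set n' := Nat.card Y
  set ε : Y ≃ Fin n' := Finite.equivFin Y
  set c : FreeGroup Y ≃* FreeGroup (Fin n') := FreeGroup.freeGroupCongr ε with hc
  set cE : Monoid.End (FreeGroup Y) →* Monoid.End (FreeGroup (Fin n')) := endCongrHom c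
  have hpt : ∀ (σ : Monoid.End (FreeGroup Y)) (x : FreeGroup Y), cE σ (c x) = c (σ x) := by
    intro σ x
    rw [endCongrHom_apply]
    exact congrArg c (congrArg σ (c.symm_apply_apply x))
  have hclosure : Submonoid.closure (cE '' Φs) = (Submonoid.closure Φs).map cE :=
    (MonoidHom.map_mclosure cE Φs).symm
  have hsets : c '' (Qs ∪ ⋃ σ ∈ Submonoid.closure Φs, ⇑σ '' Rs)
      = (c '' Qs) ∪ ⋃ σ' ∈ Submonoid.closure (cE '' Φs), ⇑σ' '' (c '' Rs) := by
    rw [Set.image_union]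
    congr 1
    ext x
    simp only [Set.mem_image, Set.mem_iUnion, hclosure, Submonoid.mem_map]
    constructor
    · rintro ⟨y, ⟨σ, hσ, r, hr, rfl⟩, rfl⟩
      exact ⟨cE σ, ⟨σ, hσ, rfl⟩, c r, ⟨r, hr, rfl⟩, hpt σ r⟩
    · rintro ⟨σ', ⟨σ, hσ, rfl⟩, z, ⟨r, hr, rfl⟩, rfl⟩
      exact ⟨σ r, ⟨σ, hσ, r, hr, rfl⟩, (hpt σ r).symm⟩
  have hsurj : Function.Surjective c.toMonoidHom := c.surjective
  have hmap : (lpresKernel Qs Rs Φs).map c.toMonoidHom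
      = lpresKernel (c '' Qs) (c '' Rs) (cE '' Φs) := by
    unfold lpresKernel
    rw [Subgroup.map_normalClosure _ c.toMonoidHom hsurj]
    rw [show (⇑c.toMonoidHom : FreeGroup Y → FreeGroup (Fin n')) = ⇑c from rfl]
    rw [hsets]
  have iso : (FreeGroup Y ⧸ lpresKernel Qs Rs Φs) ≃*
      FreeGroup (Fin n') ⧸ lpresKernel (c '' Qs) (c '' Rs) (cE '' Φs) :=
    QuotientGroup.congr _ _ c hmap
  have hKeq : lpresKernel ((hQ.image c).toFinset : Set (FreeGroup (Fin n')))
      ((hR.image c).toFinset : Set (FreeGroup (Fin n')))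
      ((hΦ.image cE).toFinset : Set (Monoid.End (FreeGroup (Fin n'))))
      = lpresKernel (c '' Qs) (c '' Rs) (cE '' Φs) := by
    rw [Set.Finite.coe_toFinset, Set.Finite.coe_toFinset, Set.Finite.coe_toFinset]
  refine ⟨n', (hQ.image c).toFinset, (hR.image c).toFinset, (hΦ.image cE).toFinset,
    ⟨(e.trans iso).trans (QuotientGroup.quotientMulEquivOfEq hKeq.symm)⟩⟩

/-- The family of subgroups of the free group of index at most `k`. -/
def Wfam (n k : ℕ) : Type :=
  {W : Subgroup (FreeGroup (Fin n)) // W.index ≤ k ∧ W.FiniteIndex}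

instance Wfam.finite (n k : ℕ) : Finite (Wfam n k) := finite_subgroups_of_index_le n k

instance Wfam.fg (n k : ℕ) (W : Wfam n k) : Group.FG ↥W.1 := by
  haveI := W.2.2
  infer_instance

instance Wfam.finiteGenerators (n k : ℕ) (W : Wfam n k) :
    Finite (IsFreeGroup.Generators ↥W.1) :=
  finite_generators_of_fg _

/-- The alphabet of the new L-presentation: one Nielsen–Schreier generator for each
member of the family. -/
def Ygen (n k : ℕ) : Type := Σ W : Wfam n k, IsFreeGroup.Generators ↥W.1

instance Ygen.finite (n k : ℕ) : Finite (Ygen n k) := by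
  unfold Ygen
  infer_instance

/-- The canonical embedding of the component `W` into the big free group. -/
noncomputable def ιW {n k : ℕ} (W : Wfam n k) : ↥W.1 →* FreeGroup (Ygen n k) :=
  IsFreeGroup.lift (fun b => FreeGroup.of ⟨W, b⟩)

theorem ιW_of {n k : ℕ} (W : Wfam n k) (b : IsFreeGroup.Generators ↥W.1) :
    ιW W (IsFreeGroup.of b) = FreeGroup.of ⟨W, b⟩ :=
  IsFreeGroup.lift_of _ _

/-- The projection of the big free group onto the component `A`. -/
noncomputable def πW {n k : ℕ} (A : Wfam n k) : FreeGroup (Ygen n k) →* ↥A.1 := by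
  classical
  exact FreeGroup.lift (fun y =>
    if h : y.1 = A then (IsFreeGroup.of (h ▸ y.2) : ↥A.1) else 1)

theorem πW_of_same {n k : ℕ} (A : Wfam n k) (b : IsFreeGroup.Generators ↥A.1) :
    πW A (FreeGroup.of ⟨A, b⟩) = IsFreeGroup.of b := by
  exact FreeGroup.lift_apply_of.trans (dif_pos rfl)

theorem πW_of_ne {n k : ℕ} (A B : Wfam n k) (hBA : B ≠ A)
    (b : IsFreeGroup.Generators ↥B.1) :
    πW A (FreeGroup.of ⟨B, b⟩) = 1 := by
  exact FreeGroup.lift_apply_of.trans (dif_neg hBA)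

theorem πW_ιW_apply {n k : ℕ} (A : Wfam n k) (w : ↥A.1) : πW A (ιW A w) = w := by
  have h : (πW A).comp (ιW A) = MonoidHom.id _ :=
    IsFreeGroup.ext_hom (fun b => by
      rw [MonoidHom.comp_apply, ιW_of, πW_of_same, MonoidHom.id_apply])
  exact DFunLike.congr_fun h w

theorem πW_ιW_ne {n k : ℕ} (A B : Wfam n k) (hBA : B ≠ A) (w : ↥B.1) :
    πW A (ιW B w) = 1 := by
  have h : (πW A).comp (ιW B) = 1 :=
    IsFreeGroup.ext_hom (fun b => by
      rw [MonoidHom.comp_apply, ιW_of, πW_of_ne A B hBA, MonoidHom.one_apply])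
  exact DFunLike.congr_fun h w

/-- The endomorphism of the big free group induced by an endomorphism `φ` of the
base free group mapping the member `A` of the family into the member `B`. -/
noncomputable def τend {n k : ℕ} (φ : Monoid.End (FreeGroup (Fin n))) (A B : Wfam n k)
    (h : A.1.map φ ≤ B.1) : Monoid.End (FreeGroup (Ygen n k)) := by
  classical
  exact FreeGroup.lift (fun y =>
    if hy : y.1 = A then
      ιW B ⟨φ ((IsFreeGroup.of (hy ▸ y.2) : ↥A.1) : FreeGroup (Fin n)),
        h (Subgroup.mem_map_of_mem φ (SetLike.coe_mem _))⟩
    else 1)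

theorem τend_ιW_same {n k : ℕ} (φ : Monoid.End (FreeGroup (Fin n))) (A B : Wfam n k)
    (h : A.1.map φ ≤ B.1) (w : ↥A.1) :
    τend φ A B h (ιW A w) = ιW B ⟨φ ↑w, h (Subgroup.mem_map_of_mem φ (SetLike.coe_mem w))⟩ := by
  have heq : ((τend φ A B h : Monoid.End (FreeGroup (Ygen n k)))
        : FreeGroup (Ygen n k) →* FreeGroup (Ygen n k)).comp (ιW A)
      = (ιW B).comp ((φ.comp A.1.subtype).codRestrict B.1
          (fun w => h (Subgroup.mem_map_of_mem φ (SetLike.coe_mem w)))) :=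
    IsFreeGroup.ext_hom (fun b => by
      erw [MonoidHom.comp_apply, MonoidHom.comp_apply, ιW_of]
      show FreeGroup.lift _ (FreeGroup.of _) = _
      erw [FreeGroup.lift_apply_of, dif_pos rfl]
      rfl)
  exact DFunLike.congr_fun heq w

theorem τend_ιW_ne {n k : ℕ} (φ : Monoid.End (FreeGroup (Fin n))) (A B C : Wfam n k)
    (h : A.1.map φ ≤ B.1) (hCA : C ≠ A) (w : ↥C.1) :
    τend φ A B h (ιW C w) = 1 := by
  have heq : ((τend φ A B h : Monoid.End (FreeGroup (Ygen n k)))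
        : FreeGroup (Ygen n k) →* FreeGroup (Ygen n k)).comp (ιW C) = 1 :=
    IsFreeGroup.ext_hom (fun b => by
      erw [MonoidHom.comp_apply, ιW_of]
      show FreeGroup.lift _ (FreeGroup.of _) = _
      erw [FreeGroup.lift_apply_of, dif_neg hCA, MonoidHom.one_apply])
  exact DFunLike.congr_fun heq w

theorem main_subquotient {n : ℕ} (Qs Rs : Set (FreeGroup (Fin n)))
    (Φs : Set (Monoid.End (FreeGroup (Fin n))))
    (hQs : Qs.Finite) (hRs : Rs.Finite) (hΦs : Φs.Finite)
    (V : Subgroup (FreeGroup (Fin n))) (hV : V.FiniteIndex)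
    (hNV : lpresKernel Qs Rs Φs ≤ V) :
    IsFinitelyLPresented (V ⧸ (lpresKernel Qs Rs Φs).subgroupOf V) := by
  classical
  set N : Subgroup (FreeGroup (Fin n)) := lpresKernel Qs Rs Φs with hNdef
  haveI hNnormal : N.Normal := lpresKernel_normal Qs Rs Φs
  set k := V.index with hk
  -- the distinguished member of the family
  set V𝒲 : Wfam n k := ⟨V, le_refl _, hV⟩ with hV𝒲
  -- transversal
  haveI : Finite (FreeGroup (Fin n) ⧸ V) := V.finite_quotient_of_finiteIndex
  haveI : Finite (Quotient (QuotientGroup.rightRel V)) :=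
    Finite.of_equiv _ (QuotientGroup.quotientRightRelEquivQuotientLeftRel V).symm
  set Tset : Set (FreeGroup (Fin n)) :=
    Set.range (fun q : Quotient (QuotientGroup.rightRel V) => q.out) with hTset
  have hTfin : Tset.Finite := Set.finite_range _
  have hT : ∀ f : FreeGroup (Fin n), ∃ t, t ∈ Tset ∧ f * t⁻¹ ∈ V := by
    intro f
    refine ⟨(Quotient.mk (QuotientGroup.rightRel V) f).out, ⟨_, rfl⟩, ?_⟩
    have h := Quotient.mk_out (s := QuotientGroup.rightRel V) f
    rw [QuotientGroup.rightRel_apply] at h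
    exact h
  -- the monoid of endomorphisms we act with
  set ΦF : Set (Monoid.End (FreeGroup (Fin n))) :=
    Φs ∪ (fun t => ((MulAut.conj t).toMonoidHom : Monoid.End (FreeGroup (Fin n)))) '' Tset with hΦF
  have hΦFfin : ΦF.Finite := hΦs.union (hTfin.image _)
  -- comap stays in the family
  have hcomap : ∀ (φ : Monoid.End (FreeGroup (Fin n))) (B : Wfam n k),
      (B.1.comap φ).index ≤ k ∧ (B.1.comap φ).FiniteIndex := by
    intro φ B
    obtain ⟨h1, h2⟩ := index_comap_le φ B.1 B.2.2
    exact ⟨le_trans h1 B.2.1, h2⟩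
  set cm : Monoid.End (FreeGroup (Fin n)) → Wfam n k → Wfam n k :=
    fun φ B => ⟨B.1.comap φ, hcomap φ B⟩ with hcm
  -- the invariant normal subgroup
  set M' : Subgroup (FreeGroup (Fin n)) :=
    Subgroup.normalClosure (⋃ σ ∈ Submonoid.closure Φs, ⇑σ '' Rs) with hM'
  haveI hM'normal : M'.Normal := Subgroup.normalClosure_normal
  have hM'N : M' ≤ N := Subgroup.normalClosure_mono Set.subset_union_right
  have hRM' : ∀ r ∈ Rs, r ∈ M' := by
    intro r hr
    apply Subgroup.subset_normalClosure
    exact Set.mem_biUnion (Submonoid.one_mem _) ⟨r, hr, rfl⟩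
  have hM'inv : ∀ φ ∈ ΦF, ∀ x ∈ M', φ x ∈ M' := by
    intro φ hφ x hx
    rcases hφ with hφ | ⟨t, ht, rfl⟩
    · -- φ ∈ Φs
      have hle : M' ≤ M'.comap φ := by
        haveI : (M'.comap φ).Normal := hM'normal.comap φ
        apply Subgroup.normalClosure_le_normal
        intro y hy
        obtain ⟨σ, hσ, r, hr, rfl⟩ := by simpa using hy
        refine Subgroup.subset_normalClosure ?_
        refine Set.mem_biUnion (Submonoid.mul_mem _ (Submonoid.subset_closure hφ) hσ) ?_
        exact ⟨r, hr, rfl⟩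
      exact hle hx
    · -- conjugation
      exact hM'normal.conj_mem x hx t
  -- the three ingredient sets of the new presentation
  haveI : Finite ↥ΦF := hΦFfin.to_subtype
  haveI : Finite ↥Rs := hRs.to_subtype
  haveI : Finite ↥Qs := hQs.to_subtype
  haveI : Finite ↥Tset := hTfin.to_subtype
  set ΛE : Type := {p : Monoid.End (FreeGroup (Fin n)) × Wfam n k × Wfam n k //
    p.1 ∈ ΦF ∧ p.2.1.1.map p.1 ≤ p.2.2.1} with hΛE
  haveI : Finite ΛE := by
    refine Finite.of_injective
      (fun p : ΛE => ((⟨p.1.1, p.2.1⟩ : ↥ΦF), p.1.2.1, p.1.2.2)) ?_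
    rintro ⟨⟨a, b, c⟩, ha1, ha2⟩ ⟨⟨a', b', c'⟩, hb1, hb2⟩ h
    simp only [Prod.mk.injEq, Subtype.mk.injEq] at h
    apply Subtype.ext
    simp only [Prod.mk.injEq]
    exact ⟨h.1, h.2.1, h.2.2⟩
  
  set ΦE : Set (Monoid.End (FreeGroup (Ygen n k))) :=
    Set.range (fun p : ΛE => τend p.1.1 p.1.2.1 p.1.2.2 p.2.2) with hΦE
  have hΦEfin : ΦE.Finite := Set.finite_range _
  set ΛR : Type := {p : FreeGroup (Fin n) × Wfam n k // p.1 ∈ Rs ∧ p.1 ∈ p.2.1} with hΛR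
  haveI : Finite ΛR := by
    refine Finite.of_injective (fun p : ΛR => ((⟨p.1.1, p.2.1⟩ : ↥Rs), p.1.2)) ?_
    rintro ⟨⟨a, b⟩, ha1, ha2⟩ ⟨⟨a', b'⟩, hb1, hb2⟩ h
    simp only [Prod.mk.injEq, Subtype.mk.injEq] at h
    apply Subtype.ext
    simp only [Prod.mk.injEq]
    exact ⟨h.1, h.2⟩
  set RE : Set (FreeGroup (Ygen n k)) :=
    Set.range (fun p : ΛR => ιW p.1.2 (⟨p.1.1, p.2.2⟩ : ↥p.1.2.1)) with hRE
  have hREfin : RE.Finite := Set.finite_range _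
  have hQmemV : ∀ (t : ↥Tset) (q : ↥Qs), (↑t * ↑q * (↑t)⁻¹ : FreeGroup (Fin n)) ∈ V := by
    intro t q
    apply hNV
    exact hNnormal.conj_mem _ (Subgroup.subset_normalClosure (Set.mem_union_left _ q.2)) _
  set QE1 : Set (FreeGroup (Ygen n k)) :=
    Set.range (fun p : ↥Tset × ↥Qs =>
      ιW V𝒲 (⟨↑p.1 * ↑p.2 * (↑p.1)⁻¹, hQmemV p.1 p.2⟩ : ↥V𝒲.1)) with hQE1
  set QE2 : Set (FreeGroup (Ygen n k)) :=
    Set.range (fun y : {y : Ygen n k // y.1 ≠ V𝒲} => FreeGroup.of y.1) with hQE2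
  set QE : Set (FreeGroup (Ygen n k)) := QE1 ∪ QE2 with hQE
  have hQEfin : QE.Finite := (Set.finite_range _).union (Set.finite_range _)
  set K : Subgroup (FreeGroup (Ygen n k)) := lpresKernel QE RE ΦE with hK
  haveI hKnormal : K.Normal := lpresKernel_normal _ _ _
  set θ : FreeGroup (Ygen n k) →* V ⧸ N.subgroupOf V :=
    (QuotientGroup.mk' (N.subgroupOf V)).comp
      (πW V𝒲 : FreeGroup (Ygen n k) →* ↥V) with hθ
  
  have hsound : ∀ τ ∈ Submonoid.closure ΦE, ∀ (A : Wfam n k) (w : ↥A.1),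
      (↑w : FreeGroup (Fin n)) ∈ M' →
      τ (ιW A w) = 1 ∨ ∃ (B : Wfam n k) (w' : ↥B.1),
        (↑w' : FreeGroup (Fin n)) ∈ M' ∧ τ (ιW A w) = ιW B w' := by
    intro τ hτ
    induction hτ using Submonoid.closure_induction with
    | mem τ hτ =>
      intro A w hw
      obtain ⟨p, rfl⟩ := hτ
      by_cases hA : A = p.1.2.1
      · subst hA
        right
        refine ⟨p.1.2.2, ⟨p.1.1 ↑w, p.2.2 (Subgroup.mem_map_of_mem _ w.2)⟩, ?_, ?_⟩
        · exact hM'inv p.1.1 p.2.1 ↑w hw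
        · exact τend_ιW_same p.1.1 _ _ p.2.2 w
      · left
        exact τend_ιW_ne p.1.1 _ _ A p.2.2 hA w
    | one =>
      intro A w hw
      right
      exact ⟨A, w, hw, rfl⟩
    | mul τ₁ τ₂ h₁ h₂ ih₁ ih₂ =>
      intro A w hw
      rcases ih₂ A w hw with h | ⟨B, w', hw', heq⟩
      · left
        show τ₁ (τ₂ (ιW A w)) = 1
        rw [h, map_one]
      · rcases ih₁ B w' hw' with h' | ⟨C, w'', hw'', heq'⟩
        · left
          show τ₁ (τ₂ (ιW A w)) = 1
          rw [heq, h']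
        · right
          refine ⟨C, w'', hw'', ?_⟩
          show τ₁ (τ₂ (ιW A w)) = _
          rw [heq, heq']
  have hKle : K ≤ θ.ker := by
    rw [hK]
    unfold lpresKernel
    apply Subgroup.normalClosure_le_normal
    intro x hx
    rcases hx with hx | hx
    · rcases hx with hx | hx
      · obtain ⟨p, rfl⟩ := hx
        rw [SetLike.mem_coe, MonoidHom.mem_ker, hθ, MonoidHom.comp_apply, πW_ιW_apply,
          QuotientGroup.mk'_apply, QuotientGroup.eq_one_iff, Subgroup.mem_subgroupOf]
        exact hNnormal.conj_mem _
          (Subgroup.subset_normalClosure (Set.mem_union_left _ p.2.2)) _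
      · obtain ⟨⟨⟨B, b⟩, hy⟩, rfl⟩ := hx
        rw [SetLike.mem_coe, MonoidHom.mem_ker, hθ, MonoidHom.comp_apply]
        rw [show (πW V𝒲) (FreeGroup.of (⟨B, b⟩ : Ygen n k)) = 1 from πW_of_ne V𝒲 B hy b,
          map_one]
    · simp only [Set.mem_iUnion, Set.mem_image] at hx
      obtain ⟨τ, hτ, r', ⟨p, rfl⟩, rfl⟩ := hx
      rw [SetLike.mem_coe, MonoidHom.mem_ker]
      rcases hsound τ hτ p.1.2 ⟨p.1.1, p.2.2⟩ (hRM' p.1.1 p.2.1) with h | ⟨B, w', hw', heq⟩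
      · rw [h, map_one]
      · rw [heq, hθ, MonoidHom.comp_apply]
        by_cases hB : B = V𝒲
        · subst hB
          rw [πW_ιW_apply, QuotientGroup.mk'_apply, QuotientGroup.eq_one_iff,
            Subgroup.mem_subgroupOf]
          exact hM'N hw'
        · rw [πW_ιW_ne V𝒲 B hB w', map_one]
  
  have hkerρ : ∀ x : FreeGroup (Ygen n k), πW V𝒲 x = 1 → x ∈ K := by
    have hncl : ∀ x : FreeGroup (Ygen n k), πW V𝒲 x = 1 →
        x ∈ Subgroup.normalClosure QE2 := by
      intro x hx
      have hfac : QuotientGroup.mk' (Subgroup.normalClosure QE2)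
          = (QuotientGroup.mk' (Subgroup.normalClosure QE2)).comp
            ((ιW V𝒲 : ↥V𝒲.1 →* FreeGroup (Ygen n k)).comp (πW V𝒲)) := by
        apply FreeGroup.ext_hom
        intro y
        rcases y with ⟨B, b⟩
        by_cases hB : B = V𝒲
        · subst hB
          rw [MonoidHom.comp_apply, MonoidHom.comp_apply, πW_of_same, ιW_of]
        · rw [MonoidHom.comp_apply, MonoidHom.comp_apply, πW_of_ne V𝒲 B hB b,
            map_one, map_one, QuotientGroup.mk'_apply, QuotientGroup.eq_one_iff]
          exact Subgroup.subset_normalClosure ⟨⟨⟨B, b⟩, hB⟩, rfl⟩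
      have hx1 := DFunLike.congr_fun hfac x
      rw [MonoidHom.comp_apply, MonoidHom.comp_apply, hx, map_one, map_one] at hx1
      rw [QuotientGroup.mk'_apply, QuotientGroup.eq_one_iff] at hx1
      exact hx1
    intro x hx
    have hle : Subgroup.normalClosure QE2 ≤ K := by
      apply Subgroup.normalClosure_le_normal
      intro z hz
      exact Subgroup.subset_normalClosure (Set.mem_union_left _ (Set.mem_union_right _ hz))
    exact hle (hncl x hx)
  have hclaim : ∀ σ ∈ Submonoid.closure Φs, ∀ (B A : Wfam n k), A.1 = B.1.comap σ →
      ∃ τ ∈ Submonoid.closure ΦE, ∀ w : ↥A.1, ∃ w' : ↥B.1,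
        (↑w' : FreeGroup (Fin n)) = σ ↑w ∧ τ (ιW A w) = ιW B w' := by
    intro σ hσ
    induction hσ using Submonoid.closure_induction with
    | mem σ hσ =>
      intro B A hA
      have h : A.1.map σ ≤ B.1 := by
        rw [hA]; exact Subgroup.map_comap_le σ B.1
      refine ⟨τend σ A B h,
        Submonoid.subset_closure ⟨⟨(σ, A, B), Set.mem_union_left _ hσ, h⟩, rfl⟩, ?_⟩
      intro w
      exact ⟨⟨σ ↑w, h (Subgroup.mem_map_of_mem σ w.2)⟩, rfl, τend_ιW_same σ A B h w⟩
    | one =>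
      intro B A hA
      have hAB : A = B := Subtype.ext (by rw [hA]; exact Subgroup.comap_id B.1)
      subst hAB
      exact ⟨1, Submonoid.one_mem _, fun w => ⟨w, rfl, rfl⟩⟩
    | mul σ₁ σ₂ hσ₁ hσ₂ ih₁ ih₂ =>
      intro B A hA
      obtain ⟨τ₁, hτ₁, hc₁⟩ := ih₁ B (cm σ₁ B) rfl
      obtain ⟨τ₂, hτ₂, hc₂⟩ := ih₂ (cm σ₁ B) A
        (by rw [hA]; exact (Subgroup.comap_comap B.1 σ₁ σ₂).symm)
      refine ⟨τ₁ * τ₂, Submonoid.mul_mem _ hτ₁ hτ₂, ?_⟩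
      intro w
      obtain ⟨w₂, hw₂val, hw₂eq⟩ := hc₂ w
      obtain ⟨w₁, hw₁val, hw₁eq⟩ := hc₁ w₂
      refine ⟨w₁, ?_, ?_⟩
      · rw [hw₁val, hw₂val]; rfl
      · show τ₁ (τ₂ (ιW A w)) = _
        rw [hw₂eq, hw₁eq]
  have hcore : ∀ g ∈ (Qs ∪ ⋃ σ ∈ Submonoid.closure Φs, ⇑σ '' Rs),
      ∀ t ∈ Tset, ∀ hmem : t * g * t⁻¹ ∈ V, ιW V𝒲 ⟨t * g * t⁻¹, hmem⟩ ∈ K := by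
    intro g hg t ht hmem
    rcases hg with hgQ | hgR
    · have hmem2 : ιW V𝒲 (⟨t * g * t⁻¹, hmem⟩ : ↥V𝒲.1) ∈
          (QE ∪ ⋃ σ' ∈ Submonoid.closure ΦE, ⇑σ' '' RE) := by
        apply Set.mem_union_left
        apply Set.mem_union_left
        exact ⟨(⟨t, ht⟩, ⟨g, hgQ⟩), rfl⟩
      exact Subgroup.subset_normalClosure hmem2
    · simp only [Set.mem_iUnion, Set.mem_image] at hgR
      obtain ⟨σ, hσ, r, hr, rfl⟩ := hgR
      set φt : Monoid.End (FreeGroup (Fin n)) := (MulAut.conj t).toMonoidHom with hφt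
      have hφtF : φt ∈ ΦF := Set.mem_union_right _ ⟨t, ht, rfl⟩
      set B₀ : Wfam n k := cm φt V𝒲 with hB₀
      have h₀ : B₀.1.map φt ≤ V𝒲.1 := Subgroup.map_comap_le _ _
      have hτc : τend φt B₀ V𝒲 h₀ ∈ Submonoid.closure ΦE :=
        Submonoid.subset_closure ⟨⟨(φt, B₀, V𝒲), hφtF, h₀⟩, rfl⟩
      obtain ⟨τ, hτ, hc⟩ := hclaim σ hσ B₀ (cm σ B₀) rfl
      have hσrN : σ r ∈ N :=
        Subgroup.subset_normalClosure
          (Set.mem_union_right _ (Set.mem_biUnion hσ ⟨r, hr, rfl⟩))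
      have hrA : r ∈ (cm σ B₀).1 := by
        show r ∈ B₀.1.comap σ
        show σ r ∈ V.comap φt
        show φt (σ r) ∈ V
        have hconj : φt (σ r) = t * σ r * t⁻¹ := rfl
        rw [hconj]
        exact hNV (hNnormal.conj_mem _ hσrN t)
      obtain ⟨w', hw'val, hw'eq⟩ := hc ⟨r, hrA⟩
      have hx : (τend φt B₀ V𝒲 h₀ * τ) (ιW (cm σ B₀) ⟨r, hrA⟩)
          = ιW V𝒲 ⟨t * σ r * t⁻¹, hmem⟩ := by
        show τend φt B₀ V𝒲 h₀ (τ (ιW (cm σ B₀) ⟨r, hrA⟩)) = _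
        rw [hw'eq, τend_ιW_same]
        congr 1
        apply Subtype.ext
        show φt ↑w' = t * σ r * t⁻¹
        rw [hw'val]
        rfl
      rw [← hx]
      have hmem2 : (τend φt B₀ V𝒲 h₀ * τ) (ιW (cm σ B₀) ⟨r, hrA⟩) ∈
          (QE ∪ ⋃ σ' ∈ Submonoid.closure ΦE, ⇑σ' '' RE) := by
        apply Set.mem_union_right
        simp only [Set.mem_iUnion, Set.mem_image]
        exact ⟨_, Submonoid.mul_mem _ hτc hτ,
          ιW (cm σ B₀) ⟨r, hrA⟩, ⟨⟨(r, cm σ B₀), hr, hrA⟩, rfl⟩, rfl⟩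
      exact Subgroup.subset_normalClosure hmem2
  have hNK : ∀ v : ↥V, (↑v : FreeGroup (Fin n)) ∈ N → ιW V𝒲 v ∈ K := by
    have hL : N ≤ Subgroup.map V.subtype
        (K.comap (ιW V𝒲 : ↥V𝒲.1 →* FreeGroup (Ygen n k))) := by
      show Subgroup.closure
        (Group.conjugatesOfSet (Qs ∪ ⋃ σ ∈ Submonoid.closure Φs, ⇑σ '' Rs)) ≤ _
      rw [Subgroup.closure_le]
      intro x hx
      obtain ⟨g, hgS, hconj⟩ := Group.mem_conjugatesOfSet_iff.mp hx
      obtain ⟨c, hc⟩ := isConj_iff.mp hconj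
      obtain ⟨t, ht, hvT⟩ := hT c
      have htg : t * g * t⁻¹ ∈ V :=
        hNV (hNnormal.conj_mem _ (Subgroup.subset_normalClosure hgS) t)
      have hιm := hcore g hgS t ht htg
      have hxeq : (c * t⁻¹) * (t * g * t⁻¹) * (c * t⁻¹)⁻¹ = x := by
        rw [← hc]; group
      have hxV : x ∈ V := by
        rw [← hxeq]
        exact mul_mem (mul_mem hvT htg) (inv_mem hvT)
      refine ⟨⟨x, hxV⟩, ?_, rfl⟩
      show ιW V𝒲 (⟨x, hxV⟩ : ↥V) ∈ K
      have hsub : (⟨x, hxV⟩ : ↥V)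
          = ⟨c * t⁻¹, hvT⟩ * ⟨t * g * t⁻¹, htg⟩ * (⟨c * t⁻¹, hvT⟩)⁻¹ :=
        Subtype.ext (by simpa using hxeq.symm)
      rw [hsub, map_mul, map_mul, map_inv]
      exact hKnormal.conj_mem _ hιm _
    intro v hvN
    obtain ⟨w, hwK, hwval⟩ := hL hvN
    have hwv : w = v := Subtype.ext hwval
    subst hwv
    exact hwK
  have hθsurj : Function.Surjective θ := by
    intro x
    obtain ⟨v, rfl⟩ := QuotientGroup.mk'_surjective (N.subgroupOf V) x
    exact ⟨ιW V𝒲 v, by rw [hθ, MonoidHom.comp_apply, πW_ιW_apply]⟩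
  have hkerθ : θ.ker = K := by
    apply le_antisymm _ hKle
    intro x hx
    rw [MonoidHom.mem_ker, hθ, MonoidHom.comp_apply, QuotientGroup.mk'_apply,
      QuotientGroup.eq_one_iff, Subgroup.mem_subgroupOf] at hx
    have h2 : ιW V𝒲 (πW V𝒲 x) ∈ K := hNK (πW V𝒲 x) hx
    have h1 : x * (ιW V𝒲 (πW V𝒲 x))⁻¹ ∈ K := by
      apply hkerρ
      rw [map_mul, map_inv, πW_ιW_apply, mul_inv_cancel]
    have h3 := mul_mem h1 h2
    simpa using h3
  have isoEK : (FreeGroup (Ygen n k) ⧸ K) ≃* V ⧸ N.subgroupOf V :=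
    (QuotientGroup.quotientMulEquivOfEq hkerθ.symm).trans
      (QuotientGroup.quotientKerEquivOfSurjective θ hθsurj)
  exact isFinitelyLPresented_of_finite QE RE ΦE hQEfin hREfin hΦEfin isoEK.symm

theorem IsFinitelyLPresented.of_mulEquiv {H K : Type*} [Group H] [Group K]
    (h : IsFinitelyLPresented H) (e : K ≃* H) : IsFinitelyLPresented K := by
  obtain ⟨n, Q, R, Φ, ⟨f⟩⟩ := h
  exact ⟨n, Q, R, Φ, ⟨e.trans f⟩⟩


/-- **Reidemeister–Schreier for finitely L-presented groups** (Theorem 1.1):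
each finite index subgroup of a finitely `L`-presented group is itself
finitely `L`-presented. -/
theorem finiteIndex_subgroup_isFinitelyLPresented
    {G : Type*} [Group G] (hG : IsFinitelyLPresented G)
    (U : Subgroup G) (hU : U.FiniteIndex) :
    IsFinitelyLPresented U := by
  obtain ⟨n, Q, R, Φ, ⟨e⟩⟩ := hG
  set N : Subgroup (FreeGroup (Fin n)) :=
    lpresKernel (↑Q : Set (FreeGroup (Fin n))) (↑R : Set (FreeGroup (Fin n)))
      (↑Φ : Set (Monoid.End (FreeGroup (Fin n)))) with hN
  set U' : Subgroup (FreeGroup (Fin n) ⧸ N) := U.map e.toMonoidHom with hU'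
  set V : Subgroup (FreeGroup (Fin n)) := U'.comap (QuotientGroup.mk' N) with hVdef
  have hU'index : U'.index = U.index :=
    Subgroup.index_map_eq U e.surjective
      (by rw [show e.toMonoidHom.ker = ⊥ from (MonoidHom.ker_eq_bot_iff _).mpr e.injective]; exact bot_le)
  have hVindex : V.index = U.index := by
    rw [hVdef, Subgroup.index_comap_of_surjective _ (QuotientGroup.mk'_surjective N), hU'index]
  have hVfi : V.FiniteIndex := ⟨by rw [hVindex]; exact hU.index_ne_zero⟩
  have hNV : N ≤ V := by
    intro x hx
    show QuotientGroup.mk' N x ∈ U'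
    have : QuotientGroup.mk' N x = 1 := by
      rw [QuotientGroup.mk'_apply, QuotientGroup.eq_one_iff]
      exact hx
    rw [this]
    exact one_mem _
  set φ : V →* FreeGroup (Fin n) ⧸ N := (QuotientGroup.mk' N).comp V.subtype with hφ
  have hker : φ.ker = N.subgroupOf V := by
    ext x
    simp only [hφ, MonoidHom.mem_ker, MonoidHom.comp_apply, QuotientGroup.mk'_apply,
      QuotientGroup.eq_one_iff, Subgroup.mem_subgroupOf]
    rfl
  have hrange : φ.range = U' := by
    rw [hφ, MonoidHom.range_comp, Subgroup.range_subtype]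
    exact Subgroup.map_comap_eq_self_of_surjective (QuotientGroup.mk'_surjective N) U'
  have iso : (U : Type _) ≃* V ⧸ N.subgroupOf V :=
    ((e.subgroupMap U).trans (MulEquiv.subgroupCongr hrange.symm)).trans
      ((QuotientGroup.quotientKerEquivRange φ).symm.trans
        (QuotientGroup.quotientMulEquivOfEq hker))
  exact (main_subquotient _ _ _
    (Q.finite_toSet) (R.finite_toSet) (Φ.finite_toSet) V hVfi hNV).of_mulEquiv iso

end Auxiliary
end

section
/- Let X be a finite set, F the free group on X, and (X, Q, Φ, R) a finite L-presentation with N the normal closure in F of Q ∪ ⋃_{σ∈Φ*} σ(R), such that σ(N) ⊆ N for every σ ∈ Φ (an invariant finite L-presentation), and set G = F/N. Let H be a normal subgroup of F of finite index with N ⊆ H and σ(H) ⊆ H for every σ ∈ Φ. Then the finite-index normal subgroup H/N of G is invariantly finitely L-presented. -/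
/-- Restriction of a monoid endomorphism to an invariant subgroup. -/
def Subgroup.endRestrict {G : Type*} [Group G] (H : Subgroup G) (σ : Monoid.End G)
    (hσ : ∀ g ∈ H, σ g ∈ H) : Monoid.End ↥H :=
  (σ.comp H.subtype).codRestrict H fun h => hσ h h.2

@[simp] lemma Subgroup.coe_endRestrict {G : Type*} [Group G] (H : Subgroup G)
    (σ : Monoid.End G) (hσ : ∀ g ∈ H, σ g ∈ H) (h : ↥H) :
    (H.endRestrict σ hσ h : G) = σ h := rfl

/-- Elements of the closure of `Ψ` leave the normal closure of the `Ψ*`-orbit of `S`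
invariant. -/
lemma orbit_normalClosure_invariant {G : Type*} [Group G] (Ψ : Set (Monoid.End G)) (S : Set G)
    {τ : Monoid.End G} (hτ : τ ∈ Submonoid.closure Ψ) :
    ∀ g ∈ Subgroup.normalClosure (⋃ σ ∈ Submonoid.closure Ψ, ⇑σ '' S),
      τ g ∈ Subgroup.normalClosure (⋃ σ ∈ Submonoid.closure Ψ, ⇑σ '' S) := by
  intro g hg
  haveI : ((Subgroup.normalClosure (⋃ σ ∈ Submonoid.closure Ψ, ⇑σ '' S)).comap
      (τ : G →* G)).Normal :=
    Subgroup.Normal.comap Subgroup.normalClosure_normal _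
  suffices h : Subgroup.normalClosure (⋃ σ ∈ Submonoid.closure Ψ, ⇑σ '' S) ≤
      (Subgroup.normalClosure (⋃ σ ∈ Submonoid.closure Ψ, ⇑σ '' S)).comap (τ : G →* G) by
    exact h hg
  refine Subgroup.normalClosure_le_normal ?_
  rintro x hx
  simp only [Set.mem_iUnion] at hx
  obtain ⟨σ, hσ, s, hs, rfl⟩ := hx
  rw [SetLike.mem_coe]
  refine Subgroup.mem_comap.mpr ?_
  refine Subgroup.subset_normalClosure ?_
  simp only [Set.mem_iUnion]
  exact ⟨τ * σ, mul_mem hτ hσ, s, hs, rfl⟩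

lemma exists_mulEquiv_freeGroup_fin (G : Type) [Group G] [IsFreeGroup G] [Group.FG G] :
    ∃ m : ℕ, Nonempty (G ≃* FreeGroup (Fin m)) := by
  obtain ⟨e⟩ : Nonempty (G ≃* FreeGroup (IsFreeGroup.Generators G)) := ⟨IsFreeGroup.toFreeGroup G⟩
  set B := IsFreeGroup.Generators G
  have hfg : Group.FG (FreeGroup B) :=
    Group.fg_of_surjective (f := e.toMonoidHom) e.surjective
  have hfgAb : Group.FG (Abelianization (FreeGroup B)) :=
    Group.fg_of_surjective (f := Abelianization.of) (Quotient.mk''_surjective)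
  have hadd : AddGroup.FG (FreeAbelianGroup B) := GroupFG.iff_add_fg.mp hfgAb
  have : Module.Finite ℤ (FreeAbelianGroup B) := Module.Finite.iff_addGroup_fg.mpr hadd
  have hB : Finite B := Module.Finite.finite_basis (FreeAbelianGroup.basis B)
  have : Fintype B := Fintype.ofFinite B
  exact ⟨Fintype.card B, ⟨e.trans (FreeGroup.freeGroupCongr (Fintype.equivFin B))⟩⟩

instance freeGroup_fin_fg (n : ℕ) : Group.FG (FreeGroup (Fin n)) :=
  ⟨⟨Finset.univ.image FreeGroup.of, by
    rw [Finset.coe_image, Finset.coe_univ, Set.image_univ, FreeGroup.closure_range_of]⟩⟩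


/-- Theorem 6.1: let `(X, Q, Φ, R)` be an invariant finite `L`-presentation of
`G = F/N` and let `H` be a normal subgroup of the free group `F` of finite index
with `N ⊆ H` which is invariant under every `σ ∈ Φ`.  Then the finite-index normal
subgroup `H/N` of `G` is invariantly finitely `L`-presented. -/
theorem normal_phiInvariant_subgroup_isInvariantlyFinitelyLPresented
    (n : ℕ) (Q R : Finset (FreeGroup (Fin n)))
    (Φ : Finset (Monoid.End (FreeGroup (Fin n))))
    (hinv : ∀ σ ∈ Φ, ∀ g ∈ lpresKernel (Q : Set _) (R : Set _) (Φ : Set _),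
      σ g ∈ lpresKernel (Q : Set _) (R : Set _) (Φ : Set _))
    (H : Subgroup (FreeGroup (Fin n))) (hHn : H.Normal) (hHfi : H.FiniteIndex)
    (hNH : lpresKernel (Q : Set _) (R : Set _) (Φ : Set _) ≤ H)
    (hHinv : ∀ σ ∈ Φ, ∀ g ∈ H, σ g ∈ H) :
    IsInvariantlyFinitelyLPresented
      (H.map (QuotientGroup.mk' (lpresKernel (Q : Set _) (R : Set _) (Φ : Set _)))) := by
  classical
  set N : Subgroup (FreeGroup (Fin n)) := lpresKernel (Q : Set _) (R : Set _) (Φ : Set _)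
    with hNdef
  haveI hNnormal : N.Normal := lpresKernel_normal _ _ _
  haveI := hHfi
  have hQN : ∀ q ∈ (Q : Set (FreeGroup (Fin n))), q ∈ N := fun q hq =>
    Subgroup.subset_normalClosure (Set.mem_union_left _ hq)
  have hRN : ∀ r ∈ (R : Set (FreeGroup (Fin n))), r ∈ N := by
    intro r hr
    refine Subgroup.subset_normalClosure (Set.mem_union_right _ ?_)
    simp only [Set.mem_iUnion]
    exact ⟨1, one_mem _, r, hr, rfl⟩
  -- conjugation endomorphisms of H
  set cend : FreeGroup (Fin n) → Monoid.End ↥H := fun f =>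
    H.endRestrict (MulAut.conj f).toMonoidHom (fun g hg => by
      exact hHn.conj_mem g hg f) with hcenddef
  have hcend : ∀ f : FreeGroup (Fin n), ∀ h : ↥H,
      ((cend f h : ↥H) : FreeGroup (Fin n)) = f * ↑h * f⁻¹ := by
    intro f h
    simp only [hcenddef, Subgroup.coe_endRestrict, MulEquiv.coe_toMonoidHom, MulAut.conj_apply]
    rfl
  set ΦH : Finset (Monoid.End ↥H) :=
    Φ.attach.image (fun σ => H.endRestrict σ.1 (hHinv σ.1 σ.2)) ∪
      (Finset.univ.image fun i : Fin n => cend (FreeGroup.of i)) ∪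
      (Finset.univ.image fun i : Fin n => cend (FreeGroup.of i)⁻¹) with hΦHdef
  have hmem1 : ∀ (σ) (hσ : σ ∈ Φ), H.endRestrict σ (hHinv σ hσ) ∈ ΦH := by
    intro σ hσ
    refine Finset.mem_union_left _ (Finset.mem_union_left _ ?_)
    exact Finset.mem_image.mpr ⟨⟨σ, hσ⟩, Φ.mem_attach _, rfl⟩
  have hmem2 : ∀ i : Fin n, cend (FreeGroup.of i) ∈ ΦH := fun i =>
    Finset.mem_union_left _
      (Finset.mem_union_right _ (Finset.mem_image_of_mem _ (Finset.mem_univ i)))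
  have hmem3 : ∀ i : Fin n, cend (FreeGroup.of i)⁻¹ ∈ ΦH := fun i =>
    Finset.mem_union_right _ (Finset.mem_image_of_mem _ (Finset.mem_univ i))
  set S₀ : Set ↥H := Subtype.val ⁻¹' ((Q ∪ R : Finset (FreeGroup (Fin n))) : Set _) with hS₀def
  set U : Set ↥H := ⋃ τ ∈ Submonoid.closure (ΦH : Set (Monoid.End ↥H)), ⇑τ '' S₀ with hUdef
  set K : Subgroup ↥H := Subgroup.normalClosure U with hKdef
  have hS₀K : ∀ s : ↥H, (↑s : FreeGroup (Fin n)) ∈ Q ∪ R → s ∈ K := by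
    intro s hs
    refine Subgroup.subset_normalClosure ?_
    rw [hUdef]
    simp only [Set.mem_iUnion]
    exact ⟨1, one_mem _, s, hs, rfl⟩
  have hKinv : ∀ τ ∈ Submonoid.closure (ΦH : Set (Monoid.End ↥H)), ∀ g ∈ K, τ g ∈ K :=
    fun τ hτ => orbit_normalClosure_invariant _ _ hτ
  -- conjugation by any element of F is realized by the closure of ΦH
  have hconj : ∀ f : FreeGroup (Fin n), ∃ τ ∈ Submonoid.closure (ΦH : Set (Monoid.End ↥H)),
      ∀ h : ↥H, f * ↑h * f⁻¹ = ((τ h : ↥H) : FreeGroup (Fin n)) := by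
    intro f
    induction f using FreeGroup.induction_on with
    | C1 => exact ⟨1, one_mem _, fun h => by simp⟩
    | of x => exact ⟨cend (FreeGroup.of x), Submonoid.subset_closure (hmem2 x),
        fun h => (hcend _ h).symm⟩
    | inv_of x _ => exact ⟨cend (FreeGroup.of x)⁻¹, Submonoid.subset_closure (hmem3 x),
        fun h => (hcend _ h).symm⟩
    | mul f g hf hg =>
      obtain ⟨τf, hτf, hef⟩ := hf
      obtain ⟨τg, hτg, heg⟩ := hg
      refine ⟨τf * τg, mul_mem hτf hτg, fun h => ?_⟩
      have h1 : (f * g) * ↑h * (f * g)⁻¹ = f * (g * ↑h * g⁻¹) * f⁻¹ := by group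
      rw [h1, heg h, hef (τg h)]
      rfl
  -- elements of the closure of Φ are realized by the closure of ΦH
  have hΦlift : ∀ σ ∈ Submonoid.closure (Φ : Set (Monoid.End (FreeGroup (Fin n)))),
      ∃ τ ∈ Submonoid.closure (ΦH : Set (Monoid.End ↥H)),
        ∀ h : ↥H, σ ↑h = ((τ h : ↥H) : FreeGroup (Fin n)) := by
    intro σ hσ
    induction hσ using Submonoid.closure_induction with
    | mem σ hσ =>
      exact ⟨H.endRestrict σ (hHinv σ (Finset.mem_coe.mp hσ)),
        Submonoid.subset_closure (hmem1 σ (Finset.mem_coe.mp hσ)), fun h => rfl⟩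
    | one => exact ⟨1, one_mem _, fun h => rfl⟩
    | mul σ σ' _ _ ihσ ihσ' =>
      obtain ⟨τ, hτ, he⟩ := ihσ
      obtain ⟨τ', hτ', he'⟩ := ihσ'
      refine ⟨τ * τ', mul_mem hτ hτ', fun h => ?_⟩
      show σ (σ' ↑h) = _
      rw [he' h, he (τ' h)]
      rfl
  -- elements of the closure of ΦH preserve N
  have hτN : ∀ τ ∈ Submonoid.closure (ΦH : Set (Monoid.End ↥H)),
      ∀ h : ↥H, (↑h : FreeGroup (Fin n)) ∈ N → ((τ h : ↥H) : FreeGroup (Fin n)) ∈ N := by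
    intro τ hτ
    induction hτ using Submonoid.closure_induction with
    | mem τ hτ =>
      intro h hh
      rcases Finset.mem_union.mp (Finset.mem_coe.mp hτ) with h12 | h3
      · rcases Finset.mem_union.mp h12 with h1 | h2
        · obtain ⟨⟨σ, hσ⟩, -, rfl⟩ := Finset.mem_image.mp h1
          exact hinv σ hσ _ hh
        · obtain ⟨i, -, rfl⟩ := Finset.mem_image.mp h2
          rw [hcend]
          exact hNnormal.conj_mem _ hh _
      · obtain ⟨i, -, rfl⟩ := Finset.mem_image.mp h3
        rw [hcend]
        exact hNnormal.conj_mem _ hh _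
    | one => exact fun h hh => hh
    | mul τ τ' _ _ ih ih' => exact fun h hh => ih _ (ih' _ hh)
  -- Claim 1 : N ∩ H = K
  haveI hNHnormal : (N.subgroupOf H).Normal := hNnormal.subgroupOf H
  have claim1 : N.subgroupOf H = K := by
    apply le_antisymm
    · set KF : Subgroup (FreeGroup (Fin n)) := K.map H.subtype with hKF
      haveI hKFn : KF.Normal := by
        constructor
        rintro a ⟨y, hy, rfl⟩ f
        obtain ⟨τ, hτ, he⟩ := hconj f
        exact ⟨τ y, hKinv τ hτ y hy, (he y).symm⟩
      have hNKF : N ≤ KF := by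
        rw [hNdef]
        show Subgroup.normalClosure _ ≤ KF
        refine Subgroup.normalClosure_le_normal ?_
        rintro x (hx | hx)
        · exact ⟨⟨x, hNH (hQN x hx)⟩, hS₀K _ (Finset.mem_union_left _ hx), rfl⟩
        · simp only [Set.mem_iUnion] at hx
          obtain ⟨σ, hσ, r, hr, rfl⟩ := hx
          have hrH : r ∈ H := hNH (hRN r hr)
          obtain ⟨τ, hτ, he⟩ := hΦlift σ hσ
          exact ⟨τ ⟨r, hrH⟩, hKinv τ hτ _ (hS₀K _ (Finset.mem_union_right _ hr)),
            (he ⟨r, hrH⟩).symm⟩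
      intro x hx
      obtain ⟨y, hy, hyx⟩ := hNKF (Subgroup.mem_subgroupOf.mp hx)
      rwa [show y = x from Subtype.ext hyx] at hy
    · refine Subgroup.normalClosure_le_normal ?_
      rintro x hx
      rw [hUdef] at hx
      simp only [Set.mem_iUnion] at hx
      obtain ⟨τ, hτ, s, hs, rfl⟩ := hx
      rw [SetLike.mem_coe, Subgroup.mem_subgroupOf]
      refine hτN τ hτ s ?_
      rcases Finset.mem_union.mp hs with h | h
      · exact hQN _ h
      · exact hRN _ h
  -- H is a finitely generated free group
  haveI : Group.FG ↥H := H.fg_of_index_ne_zero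
  obtain ⟨m, ⟨e'⟩⟩ := exists_mulEquiv_freeGroup_fin ↥H
  set e : FreeGroup (Fin m) ≃* ↥H := e'.symm with hedef
  -- transport the data along e
  set ε : Monoid.End ↥H →* Monoid.End (FreeGroup (Fin m)) :=
    { toFun := fun τ =>
        ((e.symm.toMonoidHom.comp (τ.comp e.toMonoidHom)) : Monoid.End (FreeGroup (Fin m)))
      map_one' := by
        refine MonoidHom.ext fun x => ?_
        exact e.symm_apply_apply x
      map_mul' := fun τ σ => by
        refine MonoidHom.ext fun x => ?_
        show e.symm (τ (σ (e x))) = e.symm (τ (e (e.symm (σ (e x)))))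
        rw [MulEquiv.apply_symm_apply] } with hεdef
  have hεapp : ∀ (τ : Monoid.End ↥H) (x : FreeGroup (Fin m)), ε τ x = e.symm (τ (e x)) :=
    fun τ x => rfl
  set Φ'' : Finset (Monoid.End (FreeGroup (Fin m))) := ΦH.image ε with hΦ''def
  have hQRH : ∀ x ∈ Q ∪ R, x ∈ H := by
    intro x hx
    rcases Finset.mem_union.mp hx with h | h
    · exact hNH (hQN x h)
    · exact hNH (hRN x h)
  set R'' : Finset (FreeGroup (Fin m)) :=
    (Q ∪ R).attach.image (fun x => e.symm ⟨x.1, hQRH x.1 x.2⟩) with hR''def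
  have hR'' : (R'' : Set (FreeGroup (Fin m))) = ⇑e.symm '' S₀ := by
    ext y
    rw [hR''def]
    constructor
    · intro hy
      rw [Finset.mem_coe, Finset.mem_image] at hy
      obtain ⟨⟨x, hx⟩, -, rfl⟩ := hy
      exact ⟨⟨x, hQRH x hx⟩, hx, rfl⟩
    · rintro ⟨s, hs, rfl⟩
      rw [Finset.mem_coe, Finset.mem_image]
      have hx : (↑s : FreeGroup (Fin n)) ∈ Q ∪ R := hs
      exact ⟨⟨↑s, hx⟩, (Q ∪ R).mem_attach _, congrArg e.symm (Subtype.ext rfl)⟩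
  have hΦ''coe : (Φ'' : Set (Monoid.End (FreeGroup (Fin m)))) =
      ⇑ε '' (ΦH : Set (Monoid.End ↥H)) := by
    rw [hΦ''def, Finset.coe_image]
  -- the transported kernel
  have hsets : ((∅ : Finset (FreeGroup (Fin m))) : Set (FreeGroup (Fin m))) ∪
      (⋃ σ ∈ Submonoid.closure (Φ'' : Set (Monoid.End (FreeGroup (Fin m)))),
        ⇑σ '' (R'' : Set (FreeGroup (Fin m)))) = ⇑e ⁻¹' U := by
    rw [Finset.coe_empty, Set.empty_union]
    ext y
    constructor
    · intro hy
      simp only [Set.mem_iUnion] at hy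
      obtain ⟨σ, hσ, r, hr, rfl⟩ := hy
      have hσ' : σ ∈ (Submonoid.closure (ΦH : Set (Monoid.End ↥H))).map ε := by
        rw [MonoidHom.map_mclosure, ← hΦ''coe]
        exact hσ
      obtain ⟨τ, hτ, rfl⟩ := hσ'
      rw [hR''] at hr
      obtain ⟨s, hs, rfl⟩ := hr
      rw [Set.mem_preimage, hεapp, MulEquiv.apply_symm_apply, MulEquiv.apply_symm_apply,
        hUdef]
      simp only [Set.mem_iUnion]
      exact ⟨τ, hτ, s, hs, rfl⟩
    · intro hy
      rw [Set.mem_preimage, hUdef] at hy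
      simp only [Set.mem_iUnion] at hy
      obtain ⟨τ, hτ, s, hs, hes⟩ := hy
      simp only [Set.mem_iUnion]
      refine ⟨ε τ, ?_, ?_⟩
      · have h1 : ε τ ∈ (Submonoid.closure (ΦH : Set (Monoid.End ↥H))).map ε :=
          ⟨τ, hτ, rfl⟩
        rw [MonoidHom.map_mclosure, ← hΦ''coe] at h1
        exact h1
      · refine ⟨e.symm s, ?_, ?_⟩
        · rw [hR'']
          exact ⟨s, hs, rfl⟩
        · rw [hεapp, MulEquiv.apply_symm_apply, hes, MulEquiv.symm_apply_apply]
  have hker : lpresKernel ((∅ : Finset (FreeGroup (Fin m))) : Set _) (R'' : Set _)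
      (Φ'' : Set _) = K.comap (e : FreeGroup (Fin m) →* ↥H) := by
    show Subgroup.normalClosure _ = _
    rw [hsets, hKdef]
    exact Subgroup.comap_normalClosure U e
  -- invariance of the new presentation
  have horb : lpresKernel ((∅ : Finset (FreeGroup (Fin m))) : Set _) (R'' : Set _)
      (Φ'' : Set _) = Subgroup.normalClosure
        (⋃ σ ∈ Submonoid.closure (Φ'' : Set (Monoid.End (FreeGroup (Fin m)))),
          ⇑σ '' (R'' : Set (FreeGroup (Fin m)))) := by
    show Subgroup.normalClosure _ = _
    rw [Finset.coe_empty, Set.empty_union]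
  have hinv'' : ∀ σ ∈ Φ'', ∀ g ∈ lpresKernel ((∅ : Finset (FreeGroup (Fin m))) : Set _)
      (R'' : Set _) (Φ'' : Set _),
      σ g ∈ lpresKernel ((∅ : Finset (FreeGroup (Fin m))) : Set _) (R'' : Set _)
        (Φ'' : Set _) := by
    intro σ hσ g hg
    rw [horb] at hg ⊢
    exact orbit_normalClosure_invariant _ _
      (Submonoid.subset_closure (Finset.mem_coe.mpr hσ)) g hg
  -- assembling the isomorphism
  set L : Subgroup (FreeGroup (Fin m)) :=
    lpresKernel ((∅ : Finset (FreeGroup (Fin m))) : Set _) (R'' : Set _) (Φ'' : Set _)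
    with hLdef
  haveI : L.Normal := lpresKernel_normal _ _ _
  have hmapeq : L.map (e : FreeGroup (Fin m) →* ↥H) = N.subgroupOf H := by
    rw [hker, Subgroup.map_comap_eq_self_of_surjective e.surjective, claim1]
  have iso2 : FreeGroup (Fin m) ⧸ L ≃* ↥H ⧸ (N.subgroupOf H) :=
    QuotientGroup.congr L (N.subgroupOf H) e hmapeq
  set φ : ↥H →* ↥(H.map (QuotientGroup.mk' N)) := (QuotientGroup.mk' N).subgroupMap H
    with hφdef
  have hφker : φ.ker = N.subgroupOf H := by
    ext x
    simp only [MonoidHom.mem_ker, Subgroup.mem_subgroupOf]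
    rw [Subtype.ext_iff]
    show QuotientGroup.mk' N ↑x = 1 ↔ _
    rw [QuotientGroup.mk'_apply, QuotientGroup.eq_one_iff]
  have iso1 : ↥H ⧸ (N.subgroupOf H) ≃* ↥(H.map (QuotientGroup.mk' N)) :=
    (QuotientGroup.quotientMulEquivOfEq hφker.symm).trans
      (QuotientGroup.quotientKerEquivOfSurjective φ
        (MonoidHom.subgroupMap_surjective (QuotientGroup.mk' N) H))
  exact ⟨m, ∅, R'', Φ'', hinv'', ⟨(iso1.symm.trans iso2.symm)⟩⟩
end

section
/- Let (X, Q, Φ, R) be an invariant finite L-presentation of G = F/N, where F is the free group on the finite set X, N is the normal closure in F of Q ∪ ⋃_{σ∈Φ*} σ(R), and σ(N) ⊆ N for all σ ∈ Φ. Let H ≤ F be a subgroup of finite index with N ⊆ H, and let φ : F → Sym(H\F) be the permutation representation of F on the right cosets of H. For a word w = ψ₁ψ₂⋯ψ_n over Φ let ŵ ∈ End(F) denote the composite endomorphism obtained by applying ψ₁ first, then ψ₂, and so on. Suppose there is a finite set V of words over Φ which contains the empty word, is closed under deleting its first letter, is such that v ↦ φ∘v̂ is injective on V, such that every word w over Φ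 satisfies φ∘ŵ = φ∘v̂ for some v ∈ V, and such that for every ψ ∈ Φ and every δ ∈ V with the word ψδ not in V one has φ∘(ψδ)̂ = φ (the subgroup H/N of G is then called leaf-invariant). Then H/N is invariantly finitely L-presented. -/
/-- The permutation representation of a group `F` on the right cosets `H\F` of a
subgroup `H`, induced by right multiplication.  (With Mathlib's convention that
permutations compose right-to-left, the element `g` acts on a right coset `Hx`
as `Hx ↦ Hxg⁻¹`, which makes `g ↦ (Hx ↦ Hxg)` into a monoid homomorphism when
read in the usual left-to-right convention for permutation actions.) -/
def rightCosetRep {F : Type*} [Group F] (H : Subgroup F) :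
    F →* Equiv.Perm (Quotient (QuotientGroup.rightRel H)) where
  toFun g :=
    { toFun := Quotient.map' (· * g⁻¹) fun a b hab => by
        rw [QuotientGroup.rightRel_apply] at hab ⊢
        simpa [mul_assoc] using hab
      invFun := Quotient.map' (· * g) fun a b hab => by
        rw [QuotientGroup.rightRel_apply] at hab ⊢
        simpa [mul_assoc] using hab
      left_inv := fun q => Quotient.inductionOn' q fun a => by
        simp [Quotient.map'_mk'', mul_assoc]
      right_inv := fun q => Quotient.inductionOn' q fun a => by
        simp [Quotient.map'_mk'', mul_assoc] }
  map_one' := by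
    ext q
    exact Quotient.inductionOn' q fun a => by simp [Quotient.map'_mk'']
  map_mul' x y := by
    ext q
    exact Quotient.inductionOn' q fun a => by simp [Quotient.map'_mk'', mul_assoc]

/-- For a word `w = [ψ₁, ψ₂, …, ψₙ]` over the endomorphisms of `F`, the composite
endomorphism obtained by applying `ψ₁` first, then `ψ₂`, and so on. -/
def wordHat {F : Type*} [Group F] (w : List (Monoid.End F)) : Monoid.End F :=
  w.reverse.prod

lemma wordHat_append {F : Type*} [Group F] (a b : List (Monoid.End F)) :
    wordHat (a ++ b) = wordHat b * wordHat a := by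
  simp [wordHat, List.reverse_append]

lemma mem_of_comp_rightCosetRep {F : Type*} [Group F] {H : Subgroup F} {f : F →* F}
    (h : (rightCosetRep H).comp f = rightCosetRep H) (x : F) : f x * x⁻¹ ∈ H := by
  have h1 : rightCosetRep H (f x) = rightCosetRep H x := DFunLike.congr_fun h x
  have h2 : (Quotient.mk'' (x * (f x)⁻¹) : Quotient (QuotientGroup.rightRel H)) =
      Quotient.mk'' (x * x⁻¹) := congrArg (fun π : Equiv.Perm _ => π (Quotient.mk'' x)) h1
  have h3 := QuotientGroup.rightRel_apply.mp (Quotient.eq''.mp h2)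
  have heq : x * x⁻¹ * (x * (f x)⁻¹)⁻¹ = f x * x⁻¹ := by group
  rwa [heq] at h3

lemma freeGroup_fg_s2 (ι : Type) [Finite ι] : Group.FG (FreeGroup ι) :=
  Group.fg_iff.mpr ⟨Set.range FreeGroup.of, FreeGroup.closure_range_of ι, Set.finite_range _⟩

lemma finite_of_freeGroup_fg {ι : Type} (h : Group.FG (FreeGroup ι)) : Finite ι := by
  classical
  obtain ⟨S, hS, hSfin⟩ := Group.fg_iff.mp h
  by_contra hinf
  haveI : Infinite ι := not_finite_iff_infinite.mp hinf
  have hA : (⋃ g ∈ S, {a | a ∈ (FreeGroup.toWord g).map Prod.fst}).Finite :=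
    hSfin.biUnion fun g _ => List.finite_toSet ((FreeGroup.toWord g).map Prod.fst)
  obtain ⟨a, ha⟩ := hA.infinite_compl.nonempty
  have ha' : ∀ g ∈ S, a ∉ (FreeGroup.toWord g).map Prod.fst := by
    intro g hg hmem
    exact ha (Set.mem_biUnion hg hmem)
  set χ : FreeGroup ι →* Multiplicative ℤ :=
    FreeGroup.lift (fun b => if b = a then Multiplicative.ofAdd (1 : ℤ) else 1) with hχ
  have hχS : ∀ g ∈ S, χ g = 1 := by
    intro g hg
    have : χ g = χ (FreeGroup.mk g.toWord) := by rw [FreeGroup.mk_toWord]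
    rw [this, hχ, FreeGroup.lift_mk]
    apply List.prod_eq_one
    intro y hy
    obtain ⟨x, hx, rfl⟩ := List.mem_map.mp hy
    have hxa : x.1 ≠ a := by
      intro hcontr
      exact ha' g hg (List.mem_map.mpr ⟨x, hx, hcontr⟩)
    cases x.2 <;> simp [if_neg hxa]
  have hall : ∀ x, χ x = 1 := by
    intro x
    have hx : x ∈ Subgroup.closure S := hS ▸ Subgroup.mem_top x
    induction hx using Subgroup.closure_induction with
    | mem g hg => exact hχS g hg
    | one => exact map_one χ
    | mul x y _ _ px py => rw [map_mul, px, py, one_mul]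
    | inv x _ px => rw [map_inv, px, inv_one]
  have hofa : χ (FreeGroup.of a) = Multiplicative.ofAdd (1 : ℤ) := by
    rw [hχ, FreeGroup.lift_apply_of, if_pos rfl]
  have h1 := (hall (FreeGroup.of a)).symm.trans hofa
  have h2 : (0 : ℤ) = 1 := congrArg Multiplicative.toAdd h1
  exact one_ne_zero h2.symm


/-- Theorem 7.1: a leaf-invariant finite index subgroup of an invariantly finitely
`L`-presented group is invariantly finitely `L`-presented.  Here `G = F/N` is
presented by the invariant finite `L`-presentation `(X, Q, Φ, R)`, `H ≤ F` has
finite index with `N ⊆ H`, `φ` is the permutation representation of `F` on the right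
cosets of `H`, words over `Φ` are lists (with `ŵ` applying the first letter first),
and the subgroup `H/N` is leaf-invariant with respect to the finite set of words `V`
which contains the empty word, is closed under deleting the first letter, and on
which `v ↦ φ∘v̂` is injective. -/
theorem leafInvariant_subgroup_isInvariantlyFinitelyLPresented
    (n : ℕ) (Q R : Finset (FreeGroup (Fin n)))
    (Φ : Finset (Monoid.End (FreeGroup (Fin n))))
    (N : Subgroup (FreeGroup (Fin n))) (hNn : N.Normal)
    (hN : N = lpresKernel (Q : Set _) (R : Set _) (Φ : Set _))
    (hinv : ∀ σ ∈ Φ, ∀ g ∈ N, σ g ∈ N)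
    (H : Subgroup (FreeGroup (Fin n))) (hHfi : H.FiniteIndex) (hNH : N ≤ H)
    (φ : FreeGroup (Fin n) →* Equiv.Perm (Quotient (QuotientGroup.rightRel H)))
    (hφ : φ = rightCosetRep H)
    (V : Finset (List (Monoid.End (FreeGroup (Fin n)))))
    (hVword : ∀ w ∈ V, ∀ ψ ∈ w, ψ ∈ Φ)
    (hVnil : ([] : List (Monoid.End (FreeGroup (Fin n)))) ∈ V)
    (hVtail : ∀ (ψ : Monoid.End (FreeGroup (Fin n)))
      (δ : List (Monoid.End (FreeGroup (Fin n)))), ψ :: δ ∈ V → δ ∈ V)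
    (hVinj : Set.InjOn (fun w => φ.comp (wordHat w : FreeGroup (Fin n) →* FreeGroup (Fin n)))
      (V : Set (List (Monoid.End (FreeGroup (Fin n))))))
    (hVcover : ∀ w : List (Monoid.End (FreeGroup (Fin n))), (∀ ψ ∈ w, ψ ∈ Φ) →
      ∃ v ∈ V, φ.comp (wordHat w : FreeGroup (Fin n) →* FreeGroup (Fin n)) =
        φ.comp (wordHat v : FreeGroup (Fin n) →* FreeGroup (Fin n)))
    (hleaf : ∀ ψ ∈ Φ, ∀ δ ∈ V, ψ :: δ ∉ V →
      φ.comp (wordHat (ψ :: δ) : FreeGroup (Fin n) →* FreeGroup (Fin n)) = φ) :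
    IsInvariantlyFinitelyLPresented (H.map (QuotientGroup.mk' N)) := by
  classical
  subst hφ
  haveI := hNn
  haveI : H.FiniteIndex := hHfi
  -- the set of defining relators
  set S : Set (FreeGroup (Fin n)) := ↑Q ∪ ⋃ σ ∈ Submonoid.closure (↑Φ : Set (Monoid.End (FreeGroup (Fin n)))), ⇑σ '' ↑R with hS
  have hNS : N = Subgroup.normalClosure S := by rw [hN]; rfl
  -- words over Φ give elements of the monoid closure
  have hat_mem : ∀ w : List (Monoid.End (FreeGroup (Fin n))), (∀ ψ ∈ w, ψ ∈ Φ) →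
      wordHat w ∈ Submonoid.closure (↑Φ : Set (Monoid.End (FreeGroup (Fin n)))) := by
    intro w hw
    exact Submonoid.list_prod_mem _ fun x hx =>
      Submonoid.subset_closure (hw x (List.mem_reverse.mp hx))
  have hΦN : ∀ σ ∈ Submonoid.closure (↑Φ : Set (Monoid.End (FreeGroup (Fin n)))), ∀ g ∈ N, σ g ∈ N := by
    intro σ hσ
    induction hσ using Submonoid.closure_induction with
    | mem σ hσ => exact hinv σ hσ
    | one => intro g hg; exact hg
    | mul x y _ _ px py => intro g hg; exact px _ (py g hg)
  -- the finite set of leaf endomorphisms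
  set L : Set (Monoid.End (FreeGroup (Fin n))) :=
    {σ | ∃ ψ ∈ Φ, ∃ δ ∈ V, ψ :: δ ∉ V ∧ σ = wordHat (ψ :: δ)} with hL
  have hLfin : L.Finite := by
    have : L ⊆ (fun p : Monoid.End (FreeGroup (Fin n)) × List (Monoid.End (FreeGroup (Fin n))) => wordHat (p.1 :: p.2)) ''
        ((↑Φ : Set (Monoid.End (FreeGroup (Fin n)))) ×ˢ (↑V : Set (List (Monoid.End (FreeGroup (Fin n)))))) := by
      rintro σ ⟨ψ, hψ, δ, hδ, _, rfl⟩
      exact ⟨(ψ, δ), ⟨hψ, hδ⟩, rfl⟩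
    exact ((Φ.finite_toSet.prod V.finite_toSet).image _).subset this
  have hLφ : ∀ l ∈ L, (rightCosetRep H).comp (l : FreeGroup (Fin n) →* FreeGroup (Fin n)) = rightCosetRep H := by
    rintro l ⟨ψ, hψ, δ, hδ, hbad, rfl⟩
    exact hleaf ψ hψ δ hδ hbad
  have hLN : ∀ l ∈ L, ∀ g ∈ N, l g ∈ N := by
    rintro l ⟨ψ, hψ, δ, hδ, _, rfl⟩ g hg
    refine hΦN _ (hat_mem _ ?_) g hg
    intro ψ' hψ'
    rcases List.mem_cons.mp hψ' with h | h
    · exact h ▸ hψ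
    · exact hVword δ hδ ψ' h
  set M := Submonoid.closure L with hM
  have hMφ : ∀ β ∈ M, (rightCosetRep H).comp (β : FreeGroup (Fin n) →* FreeGroup (Fin n)) = rightCosetRep H := by
    intro β hβ
    induction hβ using Submonoid.closure_induction with
    | mem l hl => exact hLφ l hl
    | one => exact MonoidHom.comp_id _
    | mul x y _ _ px py =>
        show (rightCosetRep H).comp ((x : FreeGroup (Fin n) →* FreeGroup (Fin n)).comp (y : FreeGroup (Fin n) →* FreeGroup (Fin n))) = _
        exact MonoidHom.ext fun z => (DFunLike.congr_fun px (y z)).trans (DFunLike.congr_fun py z)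
  have hMN : ∀ β ∈ M, ∀ g ∈ N, β g ∈ N := by
    intro β hβ
    induction hβ using Submonoid.closure_induction with
    | mem l hl => exact hLN l hl
    | one => intro g hg; exact hg
    | mul x y _ _ px py => intro g hg; exact px _ (py g hg)
  have hMH : ∀ β ∈ M, ∀ x : FreeGroup (Fin n), β x * x⁻¹ ∈ H := fun β hβ x =>
    mem_of_comp_rightCosetRep (hMφ β hβ) x
  -- decomposition of an arbitrary word
  have tailDecomp : ∀ w : List (Monoid.End (FreeGroup (Fin n))), w ∉ V → w ≠ [] →
      ∃ u ψ δ, w = u ++ ψ :: δ ∧ δ ∈ V ∧ ψ :: δ ∉ V := by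
    intro w
    induction w with
    | nil => intro _ h; exact absurd rfl h
    | cons ψ0 w' ih =>
      intro hw _
      by_cases h' : w' ∈ V
      · exact ⟨[], ψ0, w', rfl, h', hw⟩
      · have hne : w' ≠ [] := fun h => h' (h ▸ hVnil)
        obtain ⟨u, ψ, δ, hdecomp, h1, h2⟩ := ih h' hne
        exact ⟨ψ0 :: u, ψ, δ, by rw [hdecomp]; rfl, h1, h2⟩
  have W2 : ∀ (k : ℕ) (w : List (Monoid.End (FreeGroup (Fin n)))), w.length ≤ k → (∀ ψ ∈ w, ψ ∈ Φ) →
      ∃ v ∈ V, ∃ β ∈ M, wordHat w = β * wordHat v := by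
    intro k
    induction k with
    | zero =>
      intro w hw _
      have hnil : w = [] := List.eq_nil_of_length_eq_zero (Nat.le_zero.mp hw)
      exact ⟨[], hVnil, 1, one_mem _, by rw [hnil, one_mul]⟩
    | succ k ih =>
      intro w hwlen hwΦ
      by_cases hwV : w ∈ V
      · exact ⟨w, hwV, 1, one_mem _, (one_mul _).symm⟩
      · have hne : w ≠ [] := fun h => hwV (h ▸ hVnil)
        obtain ⟨u, ψ, δ, rfl, hδ, hbad⟩ := tailDecomp _ hwV hne
        have hψΦ : ψ ∈ Φ := hwΦ ψ (by simp)
        have hlam : wordHat (ψ :: δ) ∈ L := ⟨ψ, hψΦ, δ, hδ, hbad, rfl⟩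
        have hulen : u.length ≤ k := by
          have := hwlen
          simp only [List.length_append, List.length_cons] at this
          omega
        obtain ⟨v, hv, β, hβ, heq⟩ := ih u hulen fun ψ' h => hwΦ ψ' (by simp [h])
        refine ⟨v, hv, wordHat (ψ :: δ) * β,
          mul_mem (Submonoid.subset_closure hlam) hβ, ?_⟩
        rw [wordHat_append, heq, mul_assoc]
  -- transversal
  haveI : Finite (FreeGroup (Fin n) ⧸ H) := H.finite_quotient_of_finiteIndex
  haveI : Finite (Quotient (QuotientGroup.rightRel H)) :=
    Finite.of_equiv _ (QuotientGroup.quotientRightRelEquivQuotientLeftRel H).symm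
  set T : Set (FreeGroup (Fin n)) :=
    Set.range fun q : Quotient (QuotientGroup.rightRel H) => q.out with hT
  have hTfin : T.Finite := Set.finite_range _
  have hTmem : ∀ f : FreeGroup (Fin n), ∃ t ∈ T, f * t⁻¹ ∈ H := by
    intro f
    refine ⟨(Quotient.mk'' f : Quotient (QuotientGroup.rightRel H)).out, ⟨_, rfl⟩, ?_⟩
    have := Quotient.out_eq' (Quotient.mk'' f : Quotient (QuotientGroup.rightRel H))
    exact QuotientGroup.rightRel_apply.mp (Quotient.eq''.mp this)
  -- base relator sets
  set BQ : Set (FreeGroup (Fin n)) := {x | ∃ t ∈ T, ∃ q ∈ Q, x = t * q * t⁻¹} with hBQ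
  have hBQfin : BQ.Finite := by
    have hsub : BQ ⊆ (fun p : FreeGroup (Fin n) × FreeGroup (Fin n) => p.1 * p.2 * p.1⁻¹) ''
        (T ×ˢ (↑Q : Set (FreeGroup (Fin n)))) := by
      rintro x ⟨t, ht, q, hq, rfl⟩
      exact ⟨(t, q), ⟨ht, hq⟩, rfl⟩
    exact ((hTfin.prod Q.finite_toSet).image _).subset hsub
  set BR : Set (FreeGroup (Fin n)) :=
    {x | ∃ t ∈ T, ∃ v ∈ V, ∃ r ∈ R, x = t * wordHat v r * t⁻¹} with hBR
  have hBRfin : BR.Finite := by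
    have hsub : BR ⊆ (fun p : FreeGroup (Fin n) × (List (Monoid.End (FreeGroup (Fin n))) ×
        FreeGroup (Fin n)) => p.1 * wordHat p.2.1 p.2.2 * p.1⁻¹) ''
        (T ×ˢ ((↑V : Set _) ×ˢ (↑R : Set (FreeGroup (Fin n))))) := by
      rintro x ⟨t, ht, v, hv, r, hr, rfl⟩
      exact ⟨(t, (v, r)), ⟨ht, hv, hr⟩, rfl⟩
    exact ((hTfin.prod (V.finite_toSet.prod R.finite_toSet)).image _).subset hsub
  have hBQN : BQ ⊆ (N : Set (FreeGroup (Fin n))) := by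
    rintro x ⟨t, ht, q, hq, rfl⟩
    have hqN : q ∈ N := hNS ▸ Subgroup.subset_normalClosure (Or.inl hq)
    exact hNn.conj_mem q hqN t
  have hBRN : BR ⊆ (N : Set (FreeGroup (Fin n))) := by
    rintro x ⟨t, ht, v, hv, r, hr, rfl⟩
    have hvS : wordHat v r ∈ S := by
      refine Or.inr (Set.mem_biUnion (hat_mem v (hVword v hv)) ⟨r, hr, rfl⟩)
    have : wordHat v r ∈ N := hNS ▸ Subgroup.subset_normalClosure hvS
    exact hNn.conj_mem _ this t
  set C : Set (FreeGroup (Fin n)) := BQ ∪ ⋃ β ∈ M, ⇑β '' BR with hC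
  have hCN : C ⊆ (N : Set (FreeGroup (Fin n))) := by
    rintro x (hx | hx)
    · exact hBQN hx
    · obtain ⟨β, hβ, y, hy, rfl⟩ := by
        simpa using hx
      exact hMN β hβ y (hBRN hy)
  set D : Set (FreeGroup (Fin n)) := {x | ∃ h ∈ H, ∃ c ∈ C, x = h * c * h⁻¹} with hD
  have hDN : D ⊆ (N : Set (FreeGroup (Fin n))) := by
    rintro x ⟨h, hh, c, hc, rfl⟩
    exact hNn.conj_mem c (hCN hc) h
  -- conjugation stability of the closure of D
  have hDconj : ∀ h ∈ H, ∀ z ∈ Subgroup.closure D, h * z * h⁻¹ ∈ Subgroup.closure D := by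
    intro h hh z hz
    induction hz using Subgroup.closure_induction with
    | mem d hd =>
      obtain ⟨h', hh', c, hc, rfl⟩ := hd
      refine Subgroup.subset_closure ⟨h * h', mul_mem hh hh', c, hc, by group⟩
    | one => simpa using one_mem _
    | mul x y _ _ px py =>
      have : h * (x * y) * h⁻¹ = (h * x * h⁻¹) * (h * y * h⁻¹) := by group
      rw [this]; exact mul_mem px py
    | inv x _ px =>
      have : h * x⁻¹ * h⁻¹ = (h * x * h⁻¹)⁻¹ := by group
      rw [this]; exact inv_mem px
  -- the key inclusion
  have key : ∀ t ∈ T, ∀ s ∈ S, t * s * t⁻¹ ∈ Subgroup.closure D := by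
    intro t ht s hs
    rcases hs with hq | hs
    · exact Subgroup.subset_closure ⟨1, one_mem H, t * s * t⁻¹, Or.inl ⟨t, ht, s, hq, rfl⟩,
        by group⟩
    · obtain ⟨σ, hσ, r, hr, rfl⟩ := by simpa using hs
      obtain ⟨l, hlΦ, hlprod⟩ := Submonoid.exists_list_of_mem_closure hσ
      have hw : wordHat l.reverse = σ := by
        rw [← hlprod]; simp [wordHat, List.reverse_reverse]
      obtain ⟨v, hv, β, hβ, heq⟩ := W2 l.reverse.length l.reverse le_rfl
        (fun ψ h => hlΦ ψ (List.mem_reverse.mp h))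
      have hσr : σ r = β (wordHat v r) := by
        rw [← hw, heq]; rfl
      set y : FreeGroup (Fin n) := t * wordHat v r * t⁻¹ with hy
      have hyBR : y ∈ BR := ⟨t, ht, v, hv, r, hr, rfl⟩
      set h0 : FreeGroup (Fin n) := β t * t⁻¹ with hh0
      have hh0H : h0 ∈ H := hMH β hβ t
      have hβy : β y = h0 * (t * β (wordHat v r) * t⁻¹) * h0⁻¹ := by
        rw [hy]
        simp only [map_mul, map_inv, hh0]
        group
      have hgoal : t * σ r * t⁻¹ = h0⁻¹ * β y * (h0⁻¹)⁻¹ := by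
        rw [hσr, hβy]; group
      rw [hgoal]
      refine Subgroup.subset_closure ⟨h0⁻¹, inv_mem hh0H, β y, ?_, rfl⟩
      exact Or.inr (Set.mem_biUnion hβ ⟨y, hyBR, rfl⟩)
  -- the main equality
  have MAINEQ : Subgroup.closure D = N := by
    refine le_antisymm ((Subgroup.closure_le N).mpr hDN) ?_
    rw [hNS]
    show Subgroup.closure (Group.conjugatesOfSet S) ≤ Subgroup.closure D
    refine (Subgroup.closure_le _).mpr ?_
    intro x hx
    obtain ⟨s, hs, hconj⟩ := Group.mem_conjugatesOfSet_iff.mp hx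
    obtain ⟨c, rfl⟩ := isConj_iff.mp hconj
    obtain ⟨t, ht, hct⟩ := hTmem c
    have hct' : c = (c * t⁻¹) * t := by group
    have : c * s * c⁻¹ = (c * t⁻¹) * (t * s * t⁻¹) * (c * t⁻¹)⁻¹ := by group
    rw [this]
    exact hDconj _ hct _ (key t ht s hs)
  -- get a free group of finite rank isomorphic to H
  haveI : Group.FG (FreeGroup (Fin n)) := freeGroup_fg_s2 (Fin n)
  haveI : Group.FG ↥H := Subgroup.fg_of_index_ne_zero H
  haveI : IsFreeGroup ↥H := inferInstance
  have hfg2 : Group.FG (FreeGroup (IsFreeGroup.Generators ↥H)) :=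
    Group.fg_of_surjective (f := (IsFreeGroup.toFreeGroup ↥H).toMonoidHom)
      (IsFreeGroup.toFreeGroup ↥H).surjective
  haveI : Finite (IsFreeGroup.Generators ↥H) := finite_of_freeGroup_fg hfg2
  obtain ⟨m, ⟨em⟩⟩ := Finite.exists_equiv_fin (IsFreeGroup.Generators ↥H)
  set e : FreeGroup (Fin m) ≃* ↥H :=
    (FreeGroup.freeGroupCongr em.symm).trans (IsFreeGroup.toFreeGroup ↥H).symm with he
  set j : FreeGroup (Fin m) →* FreeGroup (Fin n) :=
    H.subtype.comp (e : FreeGroup (Fin m) →* ↥H) with hj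
  have hjinj : Function.Injective j := H.subtype_injective.comp e.injective
  have hjmem : ∀ y, j y ∈ H := fun y => (e y).2
  have hjsurj : ∀ x ∈ H, ∃ y, j y = x := by
    intro x hx
    refine ⟨e.symm ⟨x, hx⟩, ?_⟩
    simp [hj]
  -- lifts of leaf maps to the free group on m generators
  have hLH : ∀ l ∈ L, ∀ x ∈ H, l x ∈ H := by
    intro l hl x hx
    have h1 : l x * x⁻¹ ∈ H := mem_of_comp_rightCosetRep (hLφ l hl) x
    have : l x = (l x * x⁻¹) * x := by group
    rw [this]; exact mul_mem h1 hx
  set Φ' : Set (Monoid.End (FreeGroup (Fin m))) :=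
    {σ' | ∃ l ∈ L, ∀ x, j (σ' x) = l (j x)} with hΦ'
  have hΦlift : ∀ l ∈ L, ∃ σ' ∈ Φ', ∀ x, j (σ' x) = l (j x) := by
    intro l hl
    have hcod : ∀ x : ↥H, ((l : FreeGroup (Fin n) →* FreeGroup (Fin n)).comp H.subtype) x ∈ H :=
      fun x => hLH l hl x.1 x.2
    set inner : ↥H →* ↥H :=
      MonoidHom.codRestrict ((l : FreeGroup (Fin n) →* FreeGroup (Fin n)).comp H.subtype) H hcod
      with hinner
    set σ' : Monoid.End (FreeGroup (Fin m)) :=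
      ((e.symm : ↥H →* FreeGroup (Fin m)).comp inner).comp (e : FreeGroup (Fin m) →* ↥H)
      with hσ'
    have hprop : ∀ x, j (σ' x) = l (j x) := by
      intro x
      have h1 : σ' x = e.symm (inner (e x)) := rfl
      have h2 : j (σ' x) = H.subtype (e (e.symm (inner (e x)))) := by rw [h1]; rfl
      rw [h2, MulEquiv.apply_symm_apply]
      rfl
    exact ⟨σ', ⟨l, hl, hprop⟩, hprop⟩
  have hΦ'fin : Φ'.Finite := by
    have hsub : Φ' ⊆ ⋃ l ∈ L, {σ' : Monoid.End (FreeGroup (Fin m)) | ∀ x, j (σ' x) = l (j x)} := by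
      rintro σ' ⟨l, hl, hp⟩
      exact Set.mem_biUnion hl hp
    refine (hLfin.biUnion fun l _ => ?_).subset hsub
    refine Set.Subsingleton.finite ?_
    intro σ1 h1 σ2 h2
    exact DFunLike.ext σ1 σ2 fun x => hjinj ((h1 x).trans (h2 x).symm)
  -- the finite L-presentation data over m generators
  have hQ'fin : (⇑j ⁻¹' BQ).Finite := hBQfin.preimage hjinj.injOn
  have hR'fin : (⇑j ⁻¹' BR).Finite := hBRfin.preimage hjinj.injOn
  set Q'f : Finset (FreeGroup (Fin m)) := hQ'fin.toFinset with hQ'f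
  set R'f : Finset (FreeGroup (Fin m)) := hR'fin.toFinset with hR'f
  set Φ'f : Finset (Monoid.End (FreeGroup (Fin m))) := hΦ'fin.toFinset with hΦ'f
  have hQ'img : ⇑j '' ↑Q'f = BQ := by
    rw [hQ'f, Set.Finite.coe_toFinset]
    exact Set.image_preimage_eq_of_subset fun x hx => hjsurj x (hNH (hBQN hx))
  have hR'img : ⇑j '' ↑R'f = BR := by
    rw [hR'f, Set.Finite.coe_toFinset]
    exact Set.image_preimage_eq_of_subset fun x hx => hjsurj x (hNH (hBRN hx))
  have hΦ'coe : (↑Φ'f : Set (Monoid.End (FreeGroup (Fin m)))) = Φ' := hΦ'fin.coe_toFinset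
  -- correspondence between the two monoid closures
  have corr1 : ∀ σ' ∈ Submonoid.closure (↑Φ'f : Set (Monoid.End (FreeGroup (Fin m)))),
      ∃ β ∈ M, ∀ x, j (σ' x) = β (j x) := by
    intro σ' hσ'
    rw [hΦ'coe] at hσ'
    induction hσ' using Submonoid.closure_induction with
    | mem σ hσ =>
      obtain ⟨l, hl, hp⟩ := hσ
      exact ⟨l, Submonoid.subset_closure hl, hp⟩
    | one => exact ⟨1, one_mem _, fun x => rfl⟩
    | mul x y _ _ px py =>
      obtain ⟨βx, hβx, hpx⟩ := px
      obtain ⟨βy, hβy, hpy⟩ := py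
      refine ⟨βx * βy, mul_mem hβx hβy, fun z => ?_⟩
      show j (x (y z)) = βx (βy (j z))
      rw [hpx, hpy]
  have corr2 : ∀ β ∈ M, ∃ σ' ∈ Submonoid.closure (↑Φ'f : Set (Monoid.End (FreeGroup (Fin m)))),
      ∀ x, j (σ' x) = β (j x) := by
    intro β hβ
    induction hβ using Submonoid.closure_induction with
    | mem l hl =>
      obtain ⟨σ', hσ', hp⟩ := hΦlift l hl
      exact ⟨σ', Submonoid.subset_closure (hΦ'coe ▸ hσ'), hp⟩
    | one => exact ⟨1, one_mem _, fun x => rfl⟩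
    | mul x y _ _ px py =>
      obtain ⟨σx, hσx, hpx⟩ := px
      obtain ⟨σy, hσy, hpy⟩ := py
      refine ⟨σx * σy, mul_mem hσx hσy, fun z => ?_⟩
      show j (σx (σy z)) = x (y (j z))
      rw [hpx, hpy]
  -- the kernel of the new presentation maps onto N
  set U' : Set (FreeGroup (Fin m)) :=
    ↑Q'f ∪ ⋃ σ' ∈ Submonoid.closure (↑Φ'f : Set (Monoid.End (FreeGroup (Fin m)))), ⇑σ' '' ↑R'f
    with hU'
  have hmapK : (lpresKernel (↑Q'f) (↑R'f) (↑Φ'f)).map j = N := by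
    show (Subgroup.closure (Group.conjugatesOfSet U')).map j = N
    rw [MonoidHom.map_closure]
    refine le_antisymm ((Subgroup.closure_le N).mpr ?_) ?_
    · rintro x ⟨y, hy, rfl⟩
      obtain ⟨u, hu, hconj⟩ := Group.mem_conjugatesOfSet_iff.mp hy
      obtain ⟨c, rfl⟩ := isConj_iff.mp hconj
      have hjuC : j u ∈ C := by
        rcases hu with h | h
        · exact Or.inl (hQ'img ▸ Set.mem_image_of_mem _ h)
        · obtain ⟨σ', hσ', r', hr', rfl⟩ := by simpa using h
          obtain ⟨β, hβ, hp⟩ := corr1 σ' hσ'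
          exact Or.inr (Set.mem_biUnion hβ
            ⟨j r', hR'img ▸ Set.mem_image_of_mem _ hr', (hp r').symm⟩)
      have : j (c * u * c⁻¹) = j c * j u * (j c)⁻¹ := by rw [map_mul, map_mul, map_inv]
      rw [this]
      exact hDN ⟨j c, hjmem c, j u, hjuC, rfl⟩
    · rw [← MAINEQ]
      refine Subgroup.closure_mono ?_
      rintro d ⟨h, hh, c, hc, rfl⟩
      obtain ⟨g, rfl⟩ := hjsurj h hh
      rcases hc with hBQc | hUc
      · rw [← hQ'img] at hBQc
        obtain ⟨q', hq', rfl⟩ := hBQc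
        refine ⟨g * q' * g⁻¹, ?_, by rw [map_mul, map_mul, map_inv]⟩
        exact Group.mem_conjugatesOfSet_iff.mpr ⟨q', Or.inl hq', isConj_iff.mpr ⟨g, rfl⟩⟩
      · obtain ⟨β, hβ, y, hy, rfl⟩ := by simpa using hUc
        rw [← hR'img] at hy
        obtain ⟨r', hr', rfl⟩ := hy
        obtain ⟨σ', hσ', hp⟩ := corr2 β hβ
        refine ⟨g * σ' r' * g⁻¹, ?_, ?_⟩
        · refine Group.mem_conjugatesOfSet_iff.mpr ⟨σ' r', ?_, isConj_iff.mpr ⟨g, rfl⟩⟩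
          exact Or.inr (Set.mem_biUnion hσ' ⟨r', hr', rfl⟩)
        · rw [map_mul, map_mul, map_inv, hp]
  have hKiff : ∀ x, x ∈ lpresKernel (↑Q'f) (↑R'f) (↑Φ'f) ↔ j x ∈ N := by
    intro x
    constructor
    · intro hx
      exact hmapK ▸ Subgroup.mem_map_of_mem j hx
    · intro hx
      rw [← hmapK] at hx
      obtain ⟨k, hk, hjk⟩ := hx
      rwa [← hjinj hjk]
  have hinv' : ∀ σ' ∈ Φ'f, ∀ g ∈ lpresKernel (↑Q'f) (↑R'f) (↑Φ'f),
      σ' g ∈ lpresKernel (↑Q'f) (↑R'f) (↑Φ'f) := by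
    intro σ' hσ' g hg
    have hσ'Φ' : σ' ∈ Φ' := hΦ'coe ▸ hσ'
    obtain ⟨l, hl, hp⟩ := hσ'Φ'
    refine (hKiff _).mpr ?_
    rw [hp g]
    exact hLN l hl _ ((hKiff g).mp hg)
  haveI : (N.subgroupOf H).Normal := by
    constructor
    intro x hx g
    rw [Subgroup.mem_subgroupOf] at hx ⊢
    simpa using hNn.conj_mem _ hx ↑g
  haveI : (lpresKernel (↑Q'f) (↑R'f) (↑Φ'f) :
    Subgroup (FreeGroup (Fin m))).Normal := lpresKernel_normal _ _ _
  have heK : (lpresKernel (↑Q'f) (↑R'f) (↑Φ'f)).map (e : FreeGroup (Fin m) →* ↥H) =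
      N.subgroupOf H := by
    apply Subgroup.map_injective H.subtype_injective
    rw [Subgroup.map_map, Subgroup.subgroupOf_map_subtype, inf_of_le_left hNH]
    exact hj ▸ hmapK
  have iso1 : (FreeGroup (Fin m) ⧸ lpresKernel (↑Q'f) (↑R'f) (↑Φ'f)) ≃*
      (↥H ⧸ N.subgroupOf H) := QuotientGroup.congr _ _ e heK
  set f2 : ↥H →* FreeGroup (Fin n) ⧸ N := (QuotientGroup.mk' N).comp H.subtype with hf2
  have hker : f2.ker = N.subgroupOf H := by
    rw [hf2, ← MonoidHom.comap_ker, QuotientGroup.ker_mk']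
    rfl
  have hrange : f2.range = H.map (QuotientGroup.mk' N) := by
    rw [hf2, MonoidHom.range_comp, Subgroup.range_subtype]
  have iso2 : (↥H ⧸ N.subgroupOf H) ≃* ↥f2.range :=
    (QuotientGroup.quotientMulEquivOfEq hker.symm).trans
      (QuotientGroup.quotientKerEquivRange f2)
  have iso3 : ↥f2.range ≃* ↥(H.map (QuotientGroup.mk' N)) := MulEquiv.subgroupCongr hrange
  exact ⟨m, Q'f, R'f, Φ'f, hinv', ⟨((iso3.symm.trans iso2.symm).trans iso1.symm)⟩⟩
end

section
/- Let K be a group with a normal subgroup G such that G is finitely L-presented and the quotient K/G is finitely presented. Then K is finitely L-presented. -/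
/-- A group is finitely presented if it is isomorphic to `F(X)/⟨R⟩^{F(X)}` for some
finite `X` and finite `R ⊆ F(X)`. -/
def IsFinitelyPresentedGroup (G : Type*) [Group G] : Prop :=
  ∃ (n : ℕ) (R : Finset (FreeGroup (Fin n))),
    Nonempty (G ≃* FreeGroup (Fin n) ⧸ Subgroup.normalClosure (R : Set _))

namespace LPresExtAux

variable (n m : ℕ)

def lpι : FreeGroup (Fin n) →* FreeGroup (Fin (n + m)) := FreeGroup.map (Fin.castAdd m)

def lpκ : FreeGroup (Fin m) →* FreeGroup (Fin (n + m)) := FreeGroup.map (Fin.natAdd n)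

def lpExtFun (σ : Monoid.End (FreeGroup (Fin n))) : Monoid.End (FreeGroup (Fin (n + m))) :=
  FreeGroup.lift (Fin.addCases (fun i => lpι n m (σ (FreeGroup.of i)))
    (fun j => FreeGroup.of (Fin.natAdd n j)))

@[simp] lemma lpExtFun_of_left (σ : Monoid.End (FreeGroup (Fin n))) (i : Fin n) :
    lpExtFun n m σ (FreeGroup.of (Fin.castAdd m i)) = lpι n m (σ (FreeGroup.of i)) := by
  exact FreeGroup.lift_apply_of.trans (Fin.addCases_left _)

@[simp] lemma lpExtFun_of_right (σ : Monoid.End (FreeGroup (Fin n))) (j : Fin m) :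
    lpExtFun n m σ (FreeGroup.of (Fin.natAdd n j)) = FreeGroup.of (Fin.natAdd n j) := by
  exact FreeGroup.lift_apply_of.trans (Fin.addCases_right _)

lemma lpExtFun_ι (σ : Monoid.End (FreeGroup (Fin n))) (x : FreeGroup (Fin n)) :
    lpExtFun n m σ (lpι n m x) = lpι n m (σ x) := by
  have h : (lpExtFun n m σ).comp (lpι n m) = (lpι n m).comp σ := by
    apply FreeGroup.ext_hom
    intro a
    show lpExtFun n m σ ((FreeGroup.map (Fin.castAdd m)) (FreeGroup.of a)) = _
    rw [FreeGroup.map.of]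
    rw [lpExtFun_of_left]
    simp [lpι, FreeGroup.map.of]
    rfl
  exact DFunLike.congr_fun h x

lemma lpExtFun_κ (σ : Monoid.End (FreeGroup (Fin n))) (e : FreeGroup (Fin m)) :
    lpExtFun n m σ (lpκ n m e) = lpκ n m e := by
  have h : (lpExtFun n m σ).comp (lpκ n m) = lpκ n m := by
    apply FreeGroup.ext_hom
    intro a
    show lpExtFun n m σ ((FreeGroup.map (Fin.natAdd n)) (FreeGroup.of a)) = FreeGroup.map (Fin.natAdd n) (FreeGroup.of a)
    rw [FreeGroup.map.of, lpExtFun_of_right]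
  exact DFunLike.congr_fun h e

lemma lpι_of' (i : Fin n) :
    lpι n m ((1 : Monoid.End (FreeGroup (Fin n))) (FreeGroup.of i)) = FreeGroup.of (Fin.castAdd m i) :=
  FreeGroup.map.of

def lpExt : Monoid.End (FreeGroup (Fin n)) →* Monoid.End (FreeGroup (Fin (n + m))) where
  toFun := lpExtFun n m
  map_one' := by
    apply FreeGroup.ext_hom
    intro a
    induction a using Fin.addCases with
    | left i =>
      exact (lpExtFun_of_left n m 1 i).trans (lpι_of' n m i)
    | right j =>
      exact lpExtFun_of_right n m 1 j
  map_mul' σ τ := by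
    apply FreeGroup.ext_hom
    intro a
    induction a using Fin.addCases with
    | left i =>
      show lpExtFun n m (σ * τ) (FreeGroup.of (Fin.castAdd m i)) =
        lpExtFun n m σ (lpExtFun n m τ (FreeGroup.of (Fin.castAdd m i)))
      rw [lpExtFun_of_left, lpExtFun_of_left, lpExtFun_ι]
      rfl
    | right j =>
      show lpExtFun n m (σ * τ) (FreeGroup.of (Fin.natAdd n j)) =
        lpExtFun n m σ (lpExtFun n m τ (FreeGroup.of (Fin.natAdd n j)))
      rw [lpExtFun_of_right, lpExtFun_of_right, lpExtFun_of_right]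

end LPresExtAux

namespace LPresExtAux

@[simp] lemma lpι_of (i : Fin n) :
    lpι n m (FreeGroup.of i) = FreeGroup.of (Fin.castAdd m i) := FreeGroup.map.of

@[simp] lemma lpκ_of (j : Fin m) :
    lpκ n m (FreeGroup.of j) = FreeGroup.of (Fin.natAdd n j) := FreeGroup.map.of

lemma lpresKernel_def {X : Type} (Q R : Set (FreeGroup X)) (Φ : Set (Monoid.End (FreeGroup X))) :
    lpresKernel Q R Φ = Subgroup.normalClosure (Q ∪ ⋃ σ ∈ Submonoid.closure Φ, ⇑σ '' R) := rfl

/-- The conjugating letters `t_j^{±1}`. -/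
def lpTw (n m : ℕ) (p : Fin n × Fin m × Bool) : FreeGroup (Fin (n + m)) :=
  cond p.2.2 (FreeGroup.of (Fin.natAdd n p.2.1)) (FreeGroup.of (Fin.natAdd n p.2.1))⁻¹

open Pointwise in
set_option maxHeartbeats 1000000 in
theorem extension_aux {K : Type*} [Group K] (G : Subgroup K) (hGn : G.Normal)
    {n : ℕ} (Q R : Finset (FreeGroup (Fin n))) (Φ : Finset (Monoid.End (FreeGroup (Fin n))))
    (e₁ : ↥G ≃* FreeGroup (Fin n) ⧸ lpresKernel (Q : Set _) (R : Set _) (Φ : Set _))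
    {m : ℕ} (S : Finset (FreeGroup (Fin m)))
    (e₂ : (K ⧸ G) ≃* FreeGroup (Fin m) ⧸ Subgroup.normalClosure (S : Set _)) :
    IsFinitelyLPresented K := by
  classical
  set N := lpresKernel (Q : Set (FreeGroup (Fin n))) (R : Set (FreeGroup (Fin n)))
    (Φ : Set (Monoid.End (FreeGroup (Fin n)))) with hN
  haveI : N.Normal := lpresKernel_normal _ _ _
  -- `gw` sends a word to the corresponding element of `G`.
  set gw : FreeGroup (Fin n) →* G := e₁.symm.toMonoidHom.comp (QuotientGroup.mk' N) with hgw
  have hgw_surj : Function.Surjective gw :=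
    e₁.symm.surjective.comp (QuotientGroup.mk'_surjective N)
  have hgw_ker : ∀ x, gw x = 1 ↔ x ∈ N := by
    intro x
    rw [hgw]
    simp only [MonoidHom.comp_apply, MulEquiv.coe_toMonoidHom, EmbeddingLike.map_eq_one_iff]
    exact QuotientGroup.eq_one_iff x
  -- choose lifts of the images of the generators of the quotient
  obtain ⟨τ, hτ⟩ : ∃ τ : Fin m → K,
      ∀ j, (τ j : K ⧸ G) = e₂.symm (QuotientGroup.mk (FreeGroup.of j)) := by
    choose τ hτ using fun j =>
      QuotientGroup.mk_surjective (e₂.symm (QuotientGroup.mk (FreeGroup.of j)))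
    exact ⟨τ, hτ⟩
  -- the big projection
  set π : FreeGroup (Fin (n + m)) →* K :=
    FreeGroup.lift (Fin.addCases (fun i => ((gw (FreeGroup.of i) : G) : K)) τ) with hπdef
  have hπx : ∀ i : Fin n, π (FreeGroup.of (Fin.castAdd m i)) = ((gw (FreeGroup.of i) : G) : K) := by
    intro i; rw [hπdef, FreeGroup.lift_apply_of, Fin.addCases_left]
  have hπt : ∀ j : Fin m, π (FreeGroup.of (Fin.natAdd n j)) = τ j := by
    intro j; rw [hπdef, FreeGroup.lift_apply_of, Fin.addCases_right]
  have hπι : ∀ x, π (lpι n m x) = ((gw x : G) : K) := by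
    have h : π.comp (lpι n m) = G.subtype.comp gw := by
      apply FreeGroup.ext_hom; intro a
      simp only [MonoidHom.comp_apply, lpι_of, hπx, Subgroup.coe_subtype]
    intro x; exact DFunLike.congr_fun h x
  set χ : FreeGroup (Fin (n + m)) →* K ⧸ G := (QuotientGroup.mk' G).comp π with hχdef
  have hχκ : ∀ e, χ (lpκ n m e) = e₂.symm (QuotientGroup.mk e) := by
    have h : χ.comp (lpκ n m) = e₂.symm.toMonoidHom.comp
        (QuotientGroup.mk' (Subgroup.normalClosure (S : Set (FreeGroup (Fin m))))) := by
      apply FreeGroup.ext_hom; intro a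
      simp only [MonoidHom.comp_apply, lpκ_of, hχdef, MulEquiv.coe_toMonoidHom,
        QuotientGroup.mk'_apply, hπt, hτ]
    intro e; exact DFunLike.congr_fun h e
  have hχι : ∀ x, χ (lpι n m x) = 1 := by
    intro x
    rw [hχdef, MonoidHom.comp_apply, hπι, QuotientGroup.mk'_apply,
      QuotientGroup.eq_one_iff]
    exact (gw x).2
  -- choose words for the conjugation relations
  have hcw : ∀ p : Fin n × Fin m × Bool,
      ∃ a, π (lpTw n m p * FreeGroup.of (Fin.castAdd m p.1) * (lpTw n m p)⁻¹) = π (lpι n m a) := by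
    intro p
    have hmem : π (lpTw n m p * FreeGroup.of (Fin.castAdd m p.1) * (lpTw n m p)⁻¹) ∈ G := by
      rw [map_mul, map_mul, map_inv, hπx]
      exact hGn.conj_mem _ (gw (FreeGroup.of p.1)).2 _
    obtain ⟨a, ha⟩ := hgw_surj ⟨_, hmem⟩
    exact ⟨a, by rw [hπι, ha]⟩
  choose c hc using hcw
  -- choose words for the lifted relators of the quotient presentation
  have hsv : ∀ s : {x // x ∈ S}, ∃ a, π (lpκ n m s.1) = π (lpι n m a) := by
    intro s
    have h1 : χ (lpκ n m s.1) = 1 := by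
      rw [hχκ]
      have h2 : QuotientGroup.mk s.1 = (1 : _ ⧸ Subgroup.normalClosure (S : Set (FreeGroup (Fin m)))) :=
        (QuotientGroup.eq_one_iff _).2 (Subgroup.subset_normalClosure s.2)
      rw [h2, map_one]
    have hmem : π (lpκ n m s.1) ∈ G := by
      rw [hχdef, MonoidHom.comp_apply, QuotientGroup.mk'_apply,
        QuotientGroup.eq_one_iff] at h1
      exact h1
    obtain ⟨a, ha⟩ := hgw_surj ⟨_, hmem⟩
    exact ⟨a, by rw [hπι, ha]⟩
  choose v hv using hsv
  -- the new presentation data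
  set Q' : Finset (FreeGroup (Fin (n + m))) :=
    Q.image (lpι n m) ∪
    Finset.image (fun p : Fin n × Fin m × Bool =>
      lpTw n m p * FreeGroup.of (Fin.castAdd m p.1) * (lpTw n m p)⁻¹ * (lpι n m (c p))⁻¹)
      Finset.univ ∪
    S.attach.image (fun s => lpκ n m s.1 * (lpι n m (v s))⁻¹) with hQ'def
  set R' : Finset (FreeGroup (Fin (n + m))) := R.image (lpι n m) with hR'def
  set Φ' : Finset (Monoid.End (FreeGroup (Fin (n + m)))) := Φ.image (lpExt n m) with hΦ'def
  set N' := lpresKernel (Q' : Set (FreeGroup (Fin (n + m)))) (R' : Set (FreeGroup (Fin (n + m))))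
    (Φ' : Set (Monoid.End (FreeGroup (Fin (n + m))))) with hN'def
  haveI hN'norm : N'.Normal := lpresKernel_normal _ _ _
  -- descriptions of membership
  have hclosure : ∀ σ' ∈ Submonoid.closure (Φ' : Set (Monoid.End (FreeGroup (Fin (n + m))))),
      ∃ σ ∈ Submonoid.closure (Φ : Set (Monoid.End (FreeGroup (Fin n)))), lpExt n m σ = σ' := by
    intro σ' hσ'
    rw [hΦ'def, Finset.coe_image, ← MonoidHom.map_mclosure] at hσ'
    exact Submonoid.mem_map.1 hσ'
  have hclosure' : ∀ σ ∈ Submonoid.closure (Φ : Set (Monoid.End (FreeGroup (Fin n)))),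
      lpExt n m σ ∈ Submonoid.closure (Φ' : Set (Monoid.End (FreeGroup (Fin (n + m))))) := by
    intro σ hσ
    rw [hΦ'def, Finset.coe_image, ← MonoidHom.map_mclosure]
    exact ⟨σ, hσ, rfl⟩
  have hQ'N' : ∀ w ∈ Q', w ∈ N' := by
    intro w hw
    rw [hN'def, lpresKernel_def]
    exact Subgroup.subset_normalClosure (Or.inl hw)
  have hιR : ∀ σ ∈ Submonoid.closure (Φ : Set (Monoid.End (FreeGroup (Fin n)))), ∀ r ∈ R, lpι n m (σ r) ∈ N' := by
    intro σ hσ r hr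
    rw [hN'def, lpresKernel_def]
    apply Subgroup.subset_normalClosure
    right
    refine Set.mem_biUnion (hclosure' σ hσ) ⟨lpι n m r, ?_, ?_⟩
    · rw [hR'def, Finset.coe_image]
      exact Set.mem_image_of_mem _ hr
    · exact lpExtFun_ι n m σ r
  have hNmem : ∀ x ∈ N, lpι n m x ∈ N' := by
    have hcomap : N ≤ N'.comap (lpι n m) := by
      haveI : (N'.comap (lpι n m)).Normal := hN'norm.comap _
      rw [hN, lpresKernel_def]
      apply Subgroup.normalClosure_le_normal
      rintro x (hx | hx)
      · apply Subgroup.mem_comap.2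
        apply hQ'N'
        rw [hQ'def]
        exact Finset.mem_union.2 (Or.inl (Finset.mem_union.2
          (Or.inl (Finset.mem_image_of_mem _ hx))))
      · simp only [Set.mem_iUnion, Set.mem_image] at hx
        obtain ⟨σ, hσ, r, hr, rfl⟩ := hx
        exact Subgroup.mem_comap.2 (hιR σ hσ r hr)
    intro x hx
    exact Subgroup.mem_comap.1 (hcomap hx)
  -- N' is contained in the kernel of π
  have hπN' : N' ≤ π.ker := by
    rw [hN'def, lpresKernel_def]
    apply Subgroup.normalClosure_le_normal
    rintro w (hw | hw)
    · rw [hQ'def] at hw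
      rw [SetLike.mem_coe, MonoidHom.mem_ker]
      rcases Finset.mem_union.1 hw with hw | hw
      · rcases Finset.mem_union.1 hw with hw | hw
        · obtain ⟨q, hq, rfl⟩ := Finset.mem_image.1 hw
          rw [hπι]
          have : gw q = 1 := (hgw_ker q).2 (by
            rw [hN, lpresKernel_def]
            exact Subgroup.subset_normalClosure (Or.inl hq))
          rw [this]; rfl
        · obtain ⟨p, _, rfl⟩ := Finset.mem_image.1 hw
          rw [map_mul, map_inv, hc p, mul_inv_cancel]
      · obtain ⟨s, _, rfl⟩ := Finset.mem_image.1 hw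
        rw [map_mul, map_inv, hv s, mul_inv_cancel]
    · simp only [Set.mem_iUnion, Set.mem_image] at hw
      obtain ⟨σ', hσ', y, hy, rfl⟩ := hw
      obtain ⟨σ, hσ, rfl⟩ := hclosure σ' hσ'
      rw [hR'def, Finset.coe_image] at hy
      obtain ⟨r, hr, rfl⟩ := hy
      rw [SetLike.mem_coe, MonoidHom.mem_ker]
      have hEq : (lpExt n m σ) (lpι n m r) = lpι n m (σ r) := lpExtFun_ι n m σ r
      rw [hEq, hπι]
      have : gw (σ r) = 1 := (hgw_ker _).2 (by
        rw [hN, lpresKernel_def]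
        apply Subgroup.subset_normalClosure
        right
        exact Set.mem_biUnion hσ (Set.mem_image_of_mem _ hr))
      rw [this]; rfl
  -- surjectivity of π
  have hπsurj : Function.Surjective π := by
    intro k
    obtain ⟨e, he⟩ := QuotientGroup.mk'_surjective (Subgroup.normalClosure (S : Set (FreeGroup (Fin m))))
      (e₂ (QuotientGroup.mk k))
    have h1 : χ (lpκ n m e) = QuotientGroup.mk k := by
      rw [hχκ, show (QuotientGroup.mk e : _ ⧸ Subgroup.normalClosure (S : Set (FreeGroup (Fin m)))) =
        QuotientGroup.mk' _ e from rfl, he, MulEquiv.symm_apply_apply]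
    have h2 : (π (lpκ n m e))⁻¹ * k ∈ G := by
      rw [hχdef, MonoidHom.comp_apply, QuotientGroup.mk'_apply] at h1
      exact (QuotientGroup.eq (s := G)).1 h1
    obtain ⟨a, ha⟩ := hgw_surj ⟨_, h2⟩
    refine ⟨lpκ n m e * lpι n m a, ?_⟩
    rw [map_mul, hπι, ha]
    simp
  -- the subgroup A = ι(F) ⊔ N'
  set A : Subgroup (FreeGroup (Fin (n + m))) := (lpι n m).range ⊔ N' with hAdef
  have hιA : ∀ x, lpι n m x ∈ A := fun x => le_sup_left (a := (lpι n m).range) ⟨x, rfl⟩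
  have hN'A : N' ≤ A := le_sup_right
  have key1 : ∀ (g : Fin (n + m)) (b : Bool) (i : Fin n),
      (cond b (FreeGroup.of g) (FreeGroup.of g)⁻¹) * FreeGroup.of (Fin.castAdd m i) *
        (cond b (FreeGroup.of g) (FreeGroup.of g)⁻¹)⁻¹ ∈ A := by
    intro g b i
    induction g using Fin.addCases with
    | left i' =>
      have hEq : (cond b (FreeGroup.of (Fin.castAdd m i')) (FreeGroup.of (Fin.castAdd m i'))⁻¹) *
          FreeGroup.of (Fin.castAdd m i) *
          (cond b (FreeGroup.of (Fin.castAdd m i')) (FreeGroup.of (Fin.castAdd m i'))⁻¹)⁻¹ =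
          lpι n m ((cond b (FreeGroup.of i') (FreeGroup.of i')⁻¹) * FreeGroup.of i *
            (cond b (FreeGroup.of i') (FreeGroup.of i')⁻¹)⁻¹) := by
        cases b <;> simp [map_mul, map_inv]
      rw [hEq]
      exact hιA _
    | right j =>
      have hrel : lpTw n m (i, j, b) * FreeGroup.of (Fin.castAdd m (i, j, b).1) *
          (lpTw n m (i, j, b))⁻¹ * (lpι n m (c (i, j, b)))⁻¹ ∈ N' := by
        apply hQ'N'
        rw [hQ'def]
        exact Finset.mem_union.2 (Or.inl (Finset.mem_union.2 (Or.inr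
          (Finset.mem_image.2 ⟨(i, j, b), Finset.mem_univ _, rfl⟩))))
      show lpTw n m (i, j, b) * FreeGroup.of (Fin.castAdd m i) * (lpTw n m (i, j, b))⁻¹ ∈ A
      rw [show lpTw n m (i, j, b) * FreeGroup.of (Fin.castAdd m i) * (lpTw n m (i, j, b))⁻¹ =
        (lpTw n m (i, j, b) * FreeGroup.of (Fin.castAdd m i) * (lpTw n m (i, j, b))⁻¹ *
          (lpι n m (c (i, j, b)))⁻¹) * lpι n m (c (i, j, b)) from
        (inv_mul_cancel_right _ _).symm]
      exact A.mul_mem (hN'A hrel) (hιA _)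
  have key2 : ∀ u : FreeGroup (Fin (n + m)),
      (∀ i : Fin n, u * FreeGroup.of (Fin.castAdd m i) * u⁻¹ ∈ A) →
      ∀ f : FreeGroup (Fin n), u * lpι n m f * u⁻¹ ∈ A := by
    intro u hu f
    induction f using FreeGroup.induction_on with
    | C1 => simpa using A.one_mem
    | of i => simpa using hu i
    | inv_of i ih =>
      rw [map_inv, show u * (lpι n m (FreeGroup.of i))⁻¹ * u⁻¹ = (u * lpι n m (FreeGroup.of i) * u⁻¹)⁻¹ by group]
      exact A.inv_mem ih
    | mul x y hx hy =>
      rw [map_mul, show u * (lpι n m x * lpι n m y) * u⁻¹ =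
        (u * lpι n m x * u⁻¹) * (u * lpι n m y * u⁻¹) by group]
      exact A.mul_mem hx hy
  have key3 : ∀ u : FreeGroup (Fin (n + m)),
      (∀ f, u * lpι n m f * u⁻¹ ∈ A) → ∀ a ∈ A, u * a * u⁻¹ ∈ A := by
    intro u hu a ha
    have hmul : a ∈ (((lpι n m).range : Set (FreeGroup (Fin (n + m)))) * (N' : Set (FreeGroup (Fin (n + m))))) := by
      rw [← Subgroup.mul_normal]; exact ha
    obtain ⟨x, hx, y, hy, rfl⟩ := hmul
    obtain ⟨f, rfl⟩ := hx
    rw [show u * (lpι n m f * y) * u⁻¹ = (u * lpι n m f * u⁻¹) * (u * y * u⁻¹) by group]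
    exact A.mul_mem (hu f) (hN'A (hN'norm.conj_mem y hy u))
  have hAnormal : A.Normal := by
    constructor
    have hAll : ∀ g : FreeGroup (Fin (n + m)), ∀ a ∈ A, g * a * g⁻¹ ∈ A := by
      intro g
      induction g using FreeGroup.induction_on with
      | C1 => intro a ha; simpa using ha
      | of x => exact key3 _ (key2 _ (fun i => key1 x true i))
      | inv_of x _ => exact key3 _ (key2 _ (fun i => key1 x false i))
      | mul x y hx hy =>
        intro a ha
        rw [show x * y * a * (x * y)⁻¹ = x * (y * a * y⁻¹) * x⁻¹ by group]
        exact hx _ (hy a ha)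
    intro a ha g
    exact hAll g a ha
  -- decomposition of arbitrary words
  have hdecomp : ∀ w : FreeGroup (Fin (n + m)), ∃ e, w * (lpκ n m e)⁻¹ ∈ A := by
    intro w
    induction w using FreeGroup.induction_on with
    | C1 => exact ⟨1, by simpa using A.one_mem⟩
    | of g =>
      induction g using Fin.addCases with
      | left i =>
        refine ⟨1, ?_⟩
        rw [map_one, inv_one, mul_one]
        have := hιA (FreeGroup.of i)
        rwa [lpι_of] at this
      | right j =>
        refine ⟨FreeGroup.of j, ?_⟩
        rw [lpκ_of]
        show FreeGroup.of (Fin.natAdd n j) * (FreeGroup.of (Fin.natAdd n j))⁻¹ ∈ A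
        rw [mul_inv_cancel]
        exact A.one_mem
    | inv_of g ih =>
      obtain ⟨e, he⟩ := ih
      refine ⟨e⁻¹, ?_⟩
      rw [map_inv, show (FreeGroup.of g)⁻¹ * (lpκ n m e)⁻¹⁻¹ =
        (lpκ n m e)⁻¹ * (FreeGroup.of g * (lpκ n m e)⁻¹)⁻¹ * ((lpκ n m e)⁻¹)⁻¹ by group]
      exact hAnormal.conj_mem _ (A.inv_mem he) _
    | mul x y ihx ihy =>
      obtain ⟨ex, hex⟩ := ihx
      obtain ⟨ey, hey⟩ := ihy
      refine ⟨ex * ey, ?_⟩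
      rw [map_mul, show x * y * (lpκ n m ex * lpκ n m ey)⁻¹ =
        (x * (lpκ n m ex)⁻¹) * (lpκ n m ex * (y * (lpκ n m ey)⁻¹) * (lpκ n m ex)⁻¹) by group]
      exact A.mul_mem hex (hAnormal.conj_mem _ hey _)
  -- κ of the relators' normal closure lands in A
  have hκS : ∀ e ∈ Subgroup.normalClosure (S : Set (FreeGroup (Fin m))), lpκ n m e ∈ A := by
    haveI : (A.comap (lpκ n m)).Normal := hAnormal.comap _
    have hle : Subgroup.normalClosure (S : Set (FreeGroup (Fin m))) ≤ A.comap (lpκ n m) := by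
      apply Subgroup.normalClosure_le_normal
      intro s hs
      have hsmem : s ∈ S := hs
      apply Subgroup.mem_comap.2
      rw [show lpκ n m s = (lpκ n m s * (lpι n m (v ⟨s, hsmem⟩))⁻¹) * lpι n m (v ⟨s, hsmem⟩) from
        (inv_mul_cancel_right _ _).symm]
      refine A.mul_mem (hN'A (hQ'N' _ ?_)) (hιA _)
      rw [hQ'def]
      exact Finset.mem_union.2 (Or.inr (Finset.mem_image.2 ⟨⟨s, hsmem⟩, Finset.mem_attach _ _, rfl⟩))
    intro e he
    exact Subgroup.mem_comap.1 (hle he)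
  have hAχ : ∀ a ∈ A, χ a = 1 := by
    have hle : A ≤ χ.ker := by
      rw [hAdef]
      apply sup_le
      · rintro _ ⟨f, rfl⟩
        exact MonoidHom.mem_ker.2 (hχι f)
      · intro w hw
        apply MonoidHom.mem_ker.2
        rw [hχdef, MonoidHom.comp_apply]
        have : π w = 1 := MonoidHom.mem_ker.1 (hπN' hw)
        rw [this, map_one]
    intro a ha
    exact MonoidHom.mem_ker.1 (hle ha)
  -- kernel of π equals N'
  have hker : π.ker = N' := by
    apply le_antisymm _ hπN'
    intro w hw
    have hπw : π w = 1 := MonoidHom.mem_ker.1 hw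
    obtain ⟨e, he⟩ := hdecomp w
    have hwA : w ∈ A := by
      have hχw : χ w = 1 := by
        rw [hχdef, MonoidHom.comp_apply, hπw, map_one]
      have hχa : χ (w * (lpκ n m e)⁻¹) = 1 := hAχ _ he
      have hχκe : χ (lpκ n m e) = 1 := by
        rw [map_mul, map_inv, hχw, one_mul, inv_eq_one] at hχa
        exact hχa
      have heM : e ∈ Subgroup.normalClosure (S : Set (FreeGroup (Fin m))) := by
        rw [hχκ] at hχκe
        have h0 : QuotientGroup.mk e = (1 : _ ⧸ Subgroup.normalClosure (S : Set (FreeGroup (Fin m)))) := by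
          apply e₂.symm.injective
          rw [hχκe, map_one]
        exact (QuotientGroup.eq_one_iff _).1 h0
      have hκe : lpκ n m e ∈ A := hκS e heM
      rw [show w = (w * (lpκ n m e)⁻¹) * lpκ n m e from (inv_mul_cancel_right _ _).symm]
      exact A.mul_mem he hκe
    have hmul : w ∈ (((lpι n m).range : Set (FreeGroup (Fin (n + m)))) * (N' : Set (FreeGroup (Fin (n + m))))) := by
      rw [← Subgroup.mul_normal]; exact hwA
    obtain ⟨x, hx, y, hy, hxy⟩ := hmul
    obtain ⟨f, rfl⟩ := hx
    have hxy' : lpι n m f * y = w := hxy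
    have hπy : π y = 1 := MonoidHom.mem_ker.1 (hπN' hy)
    have hπf : π (lpι n m f) = 1 := by
      have h1 : π (lpι n m f) * π y = 1 := by rw [← map_mul, hxy']; exact hπw
      rwa [hπy, mul_one] at h1
    have hf : f ∈ N := by
      rw [hπι] at hπf
      have : gw f = 1 := Subtype.ext hπf
      exact (hgw_ker f).1 this
    rw [← hxy']
    exact N'.mul_mem (hNmem f hf) hy
  refine ⟨n + m, Q', R', Φ', ⟨?_⟩⟩
  exact (QuotientGroup.quotientKerEquivOfSurjective π hπsurj).symm.trans
    (QuotientGroup.quotientMulEquivOfEq hker)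

end LPresExtAux

/-- Proposition 2.3: an extension of a finitely `L`-presented group by a finitely
presented group is finitely `L`-presented. -/
theorem extension_of_finitelyLPresented_by_finitelyPresented
    {K : Type*} [Group K] (G : Subgroup K) (hGn : G.Normal)
    (hG : IsFinitelyLPresented G)
    (hQ : IsFinitelyPresentedGroup (K ⧸ G)) :
    IsFinitelyLPresented K := by
  obtain ⟨n, Q, R, Φ, ⟨e₁⟩⟩ := hG
  obtain ⟨m, S, ⟨e₂⟩⟩ := hQ
  exact LPresExtAux.extension_aux G hGn Q R Φ e₁ S e₂
end

section
/- Every finite extension of a finitely L-presented group is finitely L-presented: if a group K has a normal subgroup G of finite index such that G is finitely L-presented, then K is finitely L-presented. -/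
namespace LPresAux

variable {n m : ℕ}

def inc (n m : ℕ) : FreeGroup (Fin n) →* FreeGroup (Fin (n + m)) :=
  FreeGroup.map (Fin.castAdd m)

def xg (n m : ℕ) (j : Fin n) : FreeGroup (Fin (n + m)) := FreeGroup.of (Fin.castAdd m j)

def tg (n m : ℕ) (i : Fin m) : FreeGroup (Fin (n + m)) := FreeGroup.of (Fin.natAdd n i)

lemma inc_of (j : Fin n) : inc n m (FreeGroup.of j) = xg n m j := by
  simp [inc, xg]

def ext (σ : Monoid.End (FreeGroup (Fin n))) : Monoid.End (FreeGroup (Fin (n + m))) :=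
  FreeGroup.lift (fun i => Sum.elim (fun j => inc n m (σ (FreeGroup.of j)))
    (fun i' => tg n m i') (finSumFinEquiv.symm i))

lemma ext_xg (σ : Monoid.End (FreeGroup (Fin n))) (j : Fin n) :
    ext (m := m) σ (xg n m j) = inc n m (σ (FreeGroup.of j)) := by
  unfold ext xg
  change (FreeGroup.lift _ : FreeGroup _ →* FreeGroup _) _ = _
  rw [FreeGroup.lift_apply_of]
  simp

lemma ext_tg (σ : Monoid.End (FreeGroup (Fin n))) (i : Fin m) :
    ext (m := m) σ (tg n m i) = tg n m i := by
  unfold ext tg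
  change (FreeGroup.lift _ : FreeGroup _ →* FreeGroup _) _ = _
  rw [FreeGroup.lift_apply_of]
  simp

lemma ext_inc (σ : Monoid.End (FreeGroup (Fin n))) (u : FreeGroup (Fin n)) :
    ext (m := m) σ (inc n m u) = inc n m (σ u) := by
  have : ((ext (m := m) σ : FreeGroup (Fin (n+m)) →* FreeGroup (Fin (n+m)))).comp (inc n m)
      = (inc n m).comp (σ : FreeGroup (Fin n) →* FreeGroup (Fin n)) := by
    apply FreeGroup.ext_hom
    intro a
    show ext σ (inc n m (FreeGroup.of a)) = inc n m (σ (FreeGroup.of a))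
    rw [inc_of, ext_xg]
  exact DFunLike.congr_fun this u

def extHom (n m : ℕ) : Monoid.End (FreeGroup (Fin n)) →* Monoid.End (FreeGroup (Fin (n + m))) where
  toFun := ext
  map_one' := by
    apply FreeGroup.ext_hom
    intro a
    rcases h : finSumFinEquiv.symm a with j | i
    · have : a = Fin.castAdd m j := by
        have := congrArg finSumFinEquiv h; simpa using this
      subst this
      exact (ext_xg (m := m) 1 j).trans (inc_of j)
    · have : a = Fin.natAdd n i := by
        have := congrArg finSumFinEquiv h; simpa using this
      subst this
      exact ext_tg (m := m) 1 i
  map_mul' σ τ := by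
    apply FreeGroup.ext_hom
    intro a
    rcases h : finSumFinEquiv.symm a with j | i
    · have : a = Fin.castAdd m j := by
        have := congrArg finSumFinEquiv h; simpa using this
      subst this
      show ext (σ * τ) (xg n m j) = ext σ (ext τ (xg n m j))
      rw [ext_xg, ext_xg, ext_inc]
      rfl
    · have : a = Fin.natAdd n i := by
        have := congrArg finSumFinEquiv h; simpa using this
      subst this
      show ext (σ * τ) (tg n m i) = ext σ (ext τ (tg n m i))
      rw [ext_tg, ext_tg, ext_tg]

section
variable {K : Type*} [Group K] (G : Subgroup K) [G.Normal]

noncomputable def sec (ε : Fin m ≃ K ⧸ G) (i : Fin m) : K :=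
  open Classical in if ε i = (1 : K ⧸ G) then 1 else (ε i).out

lemma mk_sec (ε : Fin m ≃ K ⧸ G) (i : Fin m) :
    (QuotientGroup.mk (sec G ε i) : K ⧸ G) = ε i := by
  unfold sec
  split
  · rename_i h; rw [h]; rfl
  · exact QuotientGroup.out_eq' _

lemma sec_one (ε : Fin m ≃ K ⧸ G) : sec G ε (ε.symm 1) = 1 := by
  unfold sec
  simp

variable (θ : FreeGroup (Fin n) →* K)

noncomputable def wrd (k : K) : FreeGroup (Fin n) :=
  open Classical in if h : k ∈ θ.range then h.choose else 1

lemma theta_wrd {k : K} (h : k ∈ θ.range) : θ (wrd θ k) = k := by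
  unfold wrd
  rw [dif_pos h]
  exact h.choose_spec

variable (ε : Fin m ≃ K ⧸ G)

noncomputable def relB (i j : Fin m) : FreeGroup (Fin (n + m)) :=
  tg n m i * tg n m j * (tg n m (ε.symm (ε i * ε j)))⁻¹ *
    (inc n m (wrd θ (sec G ε i * sec G ε j * (sec G ε (ε.symm (ε i * ε j)))⁻¹)))⁻¹

noncomputable def relC (i : Fin m) (j : Fin n) : FreeGroup (Fin (n + m)) :=
  tg n m i * xg n m j * (tg n m i)⁻¹ *
    (inc n m (wrd θ (sec G ε i * θ (FreeGroup.of j) * (sec G ε i)⁻¹)))⁻¹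

noncomputable def relD (i : Fin m) (j : Fin n) : FreeGroup (Fin (n + m)) :=
  (tg n m i)⁻¹ * xg n m j * tg n m i *
    (inc n m (wrd θ ((sec G ε i)⁻¹ * θ (FreeGroup.of j) * sec G ε i)))⁻¹

noncomputable def Qext (Q : Finset (FreeGroup (Fin n))) : Finset (FreeGroup (Fin (n + m))) :=
  Q.image (inc n m) ∪ {tg n m (ε.symm 1)} ∪
    Finset.image (fun p : Fin m × Fin m => relB G θ ε p.1 p.2) Finset.univ ∪
    Finset.image (fun p : Fin m × Fin n => relC G θ ε p.1 p.2) Finset.univ ∪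
    Finset.image (fun p : Fin m × Fin n => relD G θ ε p.1 p.2) Finset.univ

noncomputable def Rext (R : Finset (FreeGroup (Fin n))) : Finset (FreeGroup (Fin (n + m))) :=
  R.image (inc n m)

noncomputable def Φext (Φ : Finset (Monoid.End (FreeGroup (Fin n)))) :
    Finset (Monoid.End (FreeGroup (Fin (n + m)))) :=
  @Finset.image _ _ (Classical.decEq _) (extHom n m) Φ

lemma coe_Rext (R : Finset (FreeGroup (Fin n))) :
    (↑(Rext (m := m) R) : Set (FreeGroup (Fin (n + m)))) = inc n m '' ↑R := by
  unfold Rext; exact Finset.coe_image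

lemma coe_Φext (Φ : Finset (Monoid.End (FreeGroup (Fin n)))) :
    (↑(Φext (m := m) Φ) : Set (Monoid.End (FreeGroup (Fin (n + m))))) = ⇑(extHom n m) '' ↑Φ := by
  unfold Φext; exact @Finset.coe_image _ _ (Classical.decEq _) _ _

noncomputable def ψ : FreeGroup (Fin (n + m)) →* K :=
  FreeGroup.lift (fun i => Sum.elim (fun j => θ (FreeGroup.of j))
    (fun i' => sec G ε i') (finSumFinEquiv.symm i))

lemma psi_xg (j : Fin n) : ψ G θ ε (xg n m j) = θ (FreeGroup.of j) := by
  unfold ψ xg; rw [FreeGroup.lift_apply_of]; simp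

lemma psi_tg (i : Fin m) : ψ G θ ε (tg n m i) = sec G ε i := by
  unfold ψ tg; rw [FreeGroup.lift_apply_of]; simp

lemma psi_inc (u : FreeGroup (Fin n)) : ψ G θ ε (inc n m u) = θ u := by
  have : (ψ G θ ε).comp (inc n m) = θ := by
    apply FreeGroup.ext_hom
    intro a
    show ψ G θ ε (inc n m (FreeGroup.of a)) = θ (FreeGroup.of a)
    rw [inc_of, psi_xg]
  exact DFunLike.congr_fun this u

variable (Q R : Finset (FreeGroup (Fin n))) (Φ : Finset (Monoid.End (FreeGroup (Fin n))))

lemma ker_ge (hr : θ.range = G) (hk : θ.ker = lpresKernel ↑Q ↑R ↑Φ) :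
    lpresKernel (↑(Qext G θ ε Q) : Set _) (↑(Rext (m := m) R) : Set _)
      (↑(Φext (m := m) Φ) : Set _) ≤ (ψ G θ ε).ker := by
  apply Subgroup.normalClosure_le_normal
  intro x hx
  rw [Set.mem_union] at hx
  rcases hx with hx | hx
  · rw [SetLike.mem_coe, MonoidHom.mem_ker]
    simp only [Qext, Finset.coe_union, Set.mem_union, Finset.coe_image,
      Finset.coe_singleton, Set.mem_singleton_iff, Set.mem_image, Finset.mem_coe,
      Finset.coe_univ, Set.image_univ, Set.mem_range] at hx
    rcases hx with ((((⟨q, hq, rfl⟩ | rfl) | ⟨p, rfl⟩) | ⟨p, rfl⟩) | ⟨p, rfl⟩)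
    · rw [psi_inc]
      have : q ∈ θ.ker := by
        rw [hk]
        exact Subgroup.subset_normalClosure (Set.mem_union_left _ hq)
      exact this
    · rw [psi_tg, sec_one]
    · obtain ⟨i, j⟩ := p
      have hmem : sec G ε i * sec G ε j * (sec G ε (ε.symm (ε i * ε j)))⁻¹ ∈ θ.range := by
        rw [hr, ← QuotientGroup.eq_one_iff]
        simp only [QuotientGroup.mk_mul, QuotientGroup.mk_inv, mk_sec, Equiv.apply_symm_apply]
        group
      simp only [relB, map_mul, map_inv, psi_tg, psi_inc, theta_wrd θ hmem]
      group
    · obtain ⟨i, j⟩ := p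
      have hθj : θ (FreeGroup.of j) ∈ G := by rw [← hr]; exact ⟨FreeGroup.of j, rfl⟩
      have hmem : sec G ε i * θ (FreeGroup.of j) * (sec G ε i)⁻¹ ∈ θ.range := by
        rw [hr]
        exact ‹G.Normal›.conj_mem _ hθj _
      simp only [relC, map_mul, map_inv, psi_tg, psi_xg, psi_inc, theta_wrd θ hmem]
      group
    · obtain ⟨i, j⟩ := p
      have hθj : θ (FreeGroup.of j) ∈ G := by rw [← hr]; exact ⟨FreeGroup.of j, rfl⟩
      have hmem : (sec G ε i)⁻¹ * θ (FreeGroup.of j) * sec G ε i ∈ θ.range := by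
        rw [hr]
        simpa using ‹G.Normal›.conj_mem _ hθj (sec G ε i)⁻¹
      simp only [relD, map_mul, map_inv, psi_tg, psi_xg, psi_inc, theta_wrd θ hmem]
      group
  · simp only [Set.mem_iUnion] at hx
    obtain ⟨σ', hσ', r', hr', rfl⟩ := hx
    have hσ : σ' ∈ Submonoid.map (extHom n m) (Submonoid.closure (↑Φ : Set _)) := by
      rw [MonoidHom.map_mclosure]
      rwa [coe_Φext] at hσ'
    obtain ⟨σ, hσc, rfl⟩ := hσ
    rw [coe_Rext] at hr'
    obtain ⟨r, hrR, rfl⟩ := hr'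
    rw [SetLike.mem_coe, MonoidHom.mem_ker]
    show ψ G θ ε (ext σ (inc n m r)) = 1
    rw [ext_inc, psi_inc]
    have : σ r ∈ θ.ker := by
      rw [hk]
      apply Subgroup.subset_normalClosure
      refine Set.mem_union_right _ ?_
      exact Set.mem_iUnion₂.mpr ⟨σ, hσc, ⟨r, hrR, rfl⟩⟩
    exact this

lemma freeRange_mem {β : Type} {G' : Type*} [Group G'] (f : FreeGroup β →* G')
    (S : Subgroup G') (h : ∀ b, f (FreeGroup.of b) ∈ S) (w : FreeGroup β) : f w ∈ S := by
  have : f.range ≤ S := by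
    rw [MonoidHom.range_eq_map, ← FreeGroup.closure_range_of, MonoidHom.map_closure,
      Subgroup.closure_le]
    rintro x ⟨y, ⟨b, rfl⟩, rfl⟩
    exact h b
  exact this ⟨w, rfl⟩

lemma inc_mem_H {u : FreeGroup (Fin n)} (hu : u ∈ lpresKernel (↑Q : Set _) ↑R ↑Φ) :
    inc n m u ∈ lpresKernel (↑(Qext G θ ε Q) : Set _) (↑(Rext (m := m) R) : Set _)
      (↑(Φext (m := m) Φ) : Set _) := by
  have hle : lpresKernel (↑Q : Set _) ↑R ↑Φ ≤
      Subgroup.comap (inc n m) (lpresKernel (↑(Qext G θ ε Q) : Set _)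
        (↑(Rext (m := m) R) : Set _) (↑(Φext (m := m) Φ) : Set _)) := by
    apply Subgroup.normalClosure_le_normal
    intro x hx
    rw [SetLike.mem_coe, Subgroup.mem_comap]
    rcases hx with hx | hx
    · apply Subgroup.subset_normalClosure
      apply Set.mem_union_left
      show inc n m x ∈ (↑(Qext G θ ε Q) : Set _)
      simp only [Qext, Finset.coe_union, Set.mem_union, Finset.coe_image, Finset.mem_coe]
      exact Or.inl (Or.inl (Or.inl (Or.inl ⟨x, hx, rfl⟩)))
    · simp only [Set.mem_iUnion] at hx
      obtain ⟨σ, hσ, r, hrR, rfl⟩ := hx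
      apply Subgroup.subset_normalClosure
      apply Set.mem_union_right
      refine Set.mem_iUnion₂.mpr ⟨extHom n m σ, ?_, ?_⟩
      · rw [coe_Φext, ← MonoidHom.map_mclosure]
        exact ⟨σ, hσ, rfl⟩
      · refine ⟨inc n m r, ?_, ?_⟩
        · rw [coe_Rext]; exact ⟨r, hrR, rfl⟩
        · exact ext_inc σ r
  exact hle hu

lemma psi_surj (hr : θ.range = G) : Function.Surjective (ψ G θ ε) := by
  intro k
  have hg : k * (sec G ε (ε.symm (QuotientGroup.mk k)))⁻¹ ∈ G := by
    rw [← QuotientGroup.eq_one_iff]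
    simp only [QuotientGroup.mk_mul, QuotientGroup.mk_inv, mk_sec, Equiv.apply_symm_apply]
    group
  obtain ⟨u, hu⟩ : k * (sec G ε (ε.symm (QuotientGroup.mk k)))⁻¹ ∈ θ.range := hr ▸ hg
  refine ⟨inc n m u * tg n m (ε.symm (QuotientGroup.mk k)), ?_⟩
  rw [map_mul, psi_inc, psi_tg, hu]
  group

lemma ker_le (hr : θ.range = G) (hk : θ.ker = lpresKernel (↑Q : Set _) ↑R ↑Φ) :
    (ψ G θ ε).ker ≤ lpresKernel (↑(Qext G θ ε Q) : Set _) (↑(Rext (m := m) R) : Set _)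
      (↑(Φext (m := m) Φ) : Set _) := by
  set H : Subgroup (FreeGroup (Fin (n + m))) := lpresKernel (↑(Qext G θ ε Q) : Set _)
      (↑(Rext (m := m) R) : Set _) (↑(Φext (m := m) Φ) : Set _) with hH
  set mkH := QuotientGroup.mk' H with hmkH
  have hone : ∀ x : FreeGroup (Fin (n + m)), x ∈ H → mkH x = 1 := fun x hx =>
    (QuotientGroup.eq_one_iff x).mpr hx
  have hQH : ∀ y ∈ Qext G θ ε Q, y ∈ H :=
    fun y hy => Subgroup.subset_normalClosure (Set.mem_union_left _ hy)
  have hT0 : mkH (tg n m (ε.symm 1)) = 1 := by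
    apply hone
    apply hQH
    simp [Qext]
  have eqB : ∀ i j : Fin m, mkH (tg n m i) * mkH (tg n m j) =
      mkH (inc n m (wrd θ (sec G ε i * sec G ε j * (sec G ε (ε.symm (ε i * ε j)))⁻¹))) *
        mkH (tg n m (ε.symm (ε i * ε j))) := by
    intro i j
    have h1 : mkH (relB G θ ε i j) = 1 := by
      apply hone
      apply hQH
      simp only [Qext, Finset.mem_union]
      exact Or.inl (Or.inl (Or.inr (Finset.mem_image.mpr ⟨(i, j), Finset.mem_univ _, rfl⟩)))
    rw [relB, map_mul, map_mul, map_mul, map_inv, map_inv, mul_inv_eq_one,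
      mul_inv_eq_iff_eq_mul] at h1
    exact h1
  have eqC : ∀ (i : Fin m) (j : Fin n), mkH (tg n m i) * mkH (xg n m j) * (mkH (tg n m i))⁻¹ =
      mkH (inc n m (wrd θ (sec G ε i * θ (FreeGroup.of j) * (sec G ε i)⁻¹))) := by
    intro i j
    have h1 : mkH (relC G θ ε i j) = 1 := by
      apply hone
      apply hQH
      simp only [Qext, Finset.mem_union]
      exact Or.inl (Or.inr (Finset.mem_image.mpr ⟨(i, j), Finset.mem_univ _, rfl⟩))
    rw [relC, map_mul, map_mul, map_mul, map_inv, map_inv, mul_inv_eq_one] at h1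
    exact h1
  have eqD : ∀ (i : Fin m) (j : Fin n), (mkH (tg n m i))⁻¹ * mkH (xg n m j) * mkH (tg n m i) =
      mkH (inc n m (wrd θ ((sec G ε i)⁻¹ * θ (FreeGroup.of j) * sec G ε i))) := by
    intro i j
    have h1 : mkH (relD G θ ε i j) = 1 := by
      apply hone
      apply hQH
      simp only [Qext, Finset.mem_union]
      exact Or.inr (Finset.mem_image.mpr ⟨(i, j), Finset.mem_univ _, rfl⟩)
    rw [relD, map_mul, map_mul, map_mul, map_inv, map_inv, mul_inv_eq_one] at h1
    exact h1
  -- conjugates of the image of `F_n` by the transversal generators stay in the image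
  have hconj : ∀ (i : Fin m) (u : FreeGroup (Fin n)), ∃ w : FreeGroup (Fin n),
      mkH (inc n m w) = mkH (tg n m i) * mkH (inc n m u) * (mkH (tg n m i))⁻¹ := by
    intro i u
    have hm : ((MulAut.conj (mkH (tg n m i))).toMonoidHom.comp (mkH.comp (inc n m))) u ∈
        (mkH.comp (inc n m)).range := by
      apply freeRange_mem
      intro b
      show MulAut.conj (mkH (tg n m i)) (mkH (inc n m (FreeGroup.of b))) ∈ _
      rw [inc_of, MulAut.conj_apply, eqC i b]
      exact ⟨_, rfl⟩
    obtain ⟨w, hw⟩ := hm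
    refine ⟨w, ?_⟩
    simpa [MulAut.conj_apply] using hw
  have hconj' : ∀ (i : Fin m) (u : FreeGroup (Fin n)), ∃ w : FreeGroup (Fin n),
      mkH (inc n m w) = (mkH (tg n m i))⁻¹ * mkH (inc n m u) * mkH (tg n m i) := by
    intro i u
    have hm : ((MulAut.conj (mkH (tg n m i))⁻¹).toMonoidHom.comp (mkH.comp (inc n m))) u ∈
        (mkH.comp (inc n m)).range := by
      apply freeRange_mem
      intro b
      show MulAut.conj (mkH (tg n m i))⁻¹ (mkH (inc n m (FreeGroup.of b))) ∈ _
      rw [inc_of, MulAut.conj_apply, inv_inv, eqD i b]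
      exact ⟨_, rfl⟩
    obtain ⟨w, hw⟩ := hm
    refine ⟨w, ?_⟩
    simpa [MulAut.conj_apply, inv_inv] using hw
  have hTinv : ∀ i : Fin m, ∃ (w : FreeGroup (Fin n)) (l : Fin m),
      (mkH (tg n m i))⁻¹ = mkH (inc n m w) * mkH (tg n m l) := by
    intro i
    have hB := eqB i (ε.symm (ε i)⁻¹)
    simp only [Equiv.apply_symm_apply, mul_inv_cancel] at hB
    rw [hT0, mul_one] at hB
    obtain ⟨w, hw⟩ := hconj (ε.symm (ε i)⁻¹)
      ((wrd θ (sec G ε i * sec G ε (ε.symm (ε i)⁻¹) * (sec G ε (ε.symm (1 : K ⧸ G)))⁻¹))⁻¹)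
    refine ⟨w, ε.symm (ε i)⁻¹, ?_⟩
    rw [hw]
    simp only [map_inv]
    rw [← hB]
    group
  -- the subgroup of normal forms
  let S : Subgroup (FreeGroup (Fin (n + m)) ⧸ H) :=
    { carrier := {p | ∃ (u : FreeGroup (Fin n)) (i : Fin m),
        p = mkH (inc n m u) * mkH (tg n m i)}
      one_mem' := ⟨1, ε.symm 1, by simp [hT0]⟩
      mul_mem' := by
        rintro p q ⟨u, i, rfl⟩ ⟨v, j, rfl⟩
        obtain ⟨w1, hw1⟩ := hconj i v
        refine ⟨u * w1 * wrd θ (sec G ε i * sec G ε j * (sec G ε (ε.symm (ε i * ε j)))⁻¹),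
          ε.symm (ε i * ε j), ?_⟩
        calc (mkH (inc n m u) * mkH (tg n m i)) * (mkH (inc n m v) * mkH (tg n m j))
            = mkH (inc n m u) * (mkH (tg n m i) * mkH (inc n m v) * (mkH (tg n m i))⁻¹) *
              (mkH (tg n m i) * mkH (tg n m j)) := by group
          _ = mkH (inc n m u) * mkH (inc n m w1) *
              (mkH (inc n m (wrd θ (sec G ε i * sec G ε j *
                (sec G ε (ε.symm (ε i * ε j)))⁻¹))) * mkH (tg n m (ε.symm (ε i * ε j)))) := by
              rw [hw1, eqB i j]
          _ = _ := by simp only [map_mul]; group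
      inv_mem' := by
        rintro p ⟨u, i, rfl⟩
        obtain ⟨w2, l, hw2⟩ := hTinv i
        obtain ⟨w3, hw3⟩ := hconj l u⁻¹
        refine ⟨w2 * w3, l, ?_⟩
        calc (mkH (inc n m u) * mkH (tg n m i))⁻¹
            = (mkH (tg n m i))⁻¹ * (mkH (inc n m u))⁻¹ := by group
          _ = mkH (inc n m w2) * (mkH (tg n m l) * mkH (inc n m u⁻¹) * (mkH (tg n m l))⁻¹) *
              mkH (tg n m l) := by rw [hw2]; simp only [map_inv]; group
          _ = _ := by rw [← hw3]; simp only [map_mul] }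
  have htop : ∀ p : FreeGroup (Fin (n + m)) ⧸ H, p ∈ S := by
    intro p
    obtain ⟨z, rfl⟩ := QuotientGroup.mk'_surjective H p
    apply freeRange_mem mkH S _ z
    intro b
    rcases h : finSumFinEquiv.symm b with j | i
    · have hb : b = Fin.castAdd m j := by
        have := congrArg finSumFinEquiv h; simpa using this
      subst hb
      refine ⟨FreeGroup.of j, ε.symm 1, ?_⟩
      show mkH (xg n m j) = mkH (inc n m (FreeGroup.of j)) * mkH (tg n m (ε.symm 1))
      rw [hT0, mul_one, inc_of]
    · have hb : b = Fin.natAdd n i := by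
        have := congrArg finSumFinEquiv h; simpa using this
      subst hb
      exact ⟨1, i, by simp [tg]⟩
  -- conclusion
  intro z hz
  have hψ' : H ≤ (ψ G θ ε).ker := ker_ge G θ ε Q R Φ hr hk
  set ψ' := QuotientGroup.lift H (ψ G θ ε) hψ' with hψ'def
  obtain ⟨u, i, hui⟩ := htop (mkH z)
  have hlift : ∀ x : FreeGroup (Fin (n + m)), ψ' (mkH x) = ψ G θ ε x := fun x => rfl
  have h1 : θ u * sec G ε i = 1 := by
    have := hlift z
    rw [hui, map_mul, hlift, hlift, psi_inc, psi_tg] at this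
    rw [this]
    exact hz
  have hθuG : θ u ∈ G := by rw [← hr]; exact ⟨u, rfl⟩
  have hi : ε i = 1 := by
    have : (QuotientGroup.mk (θ u * sec G ε i) : K ⧸ G) = 1 := by rw [h1]; rfl
    rw [QuotientGroup.mk_mul, mk_sec, (QuotientGroup.eq_one_iff _).mpr hθuG, one_mul] at this
    exact this
  have hi' : i = ε.symm 1 := by
    apply ε.injective
    rw [hi, Equiv.apply_symm_apply]
  rw [hi'] at hui h1
  rw [sec_one, mul_one] at h1
  have huN : u ∈ lpresKernel (↑Q : Set _) ↑R ↑Φ := by rw [← hk]; exact h1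
  have : mkH z = 1 := by
    rw [hui, hT0, mul_one]
    exact hone _ (inc_mem_H G θ ε Q R Φ huN)
  exact (QuotientGroup.eq_one_iff z).mp this

end
end LPresAux

/-- Corollary 2.4: every finite extension of a finitely `L`-presented group is
finitely `L`-presented: if `K` has a normal subgroup `G` of finite index such that
`G` is finitely `L`-presented, then `K` is finitely `L`-presented. -/
theorem finite_extension_isFinitelyLPresented
    {K : Type*} [Group K] (G : Subgroup K) (hGn : G.Normal)
    (hfi : G.FiniteIndex) (hG : IsFinitelyLPresented G) :
    IsFinitelyLPresented K := by
  haveI := hGn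
  haveI := hfi
  obtain ⟨n, Q, R, Φ, ⟨e⟩⟩ := hG
  set N : Subgroup (FreeGroup (Fin n)) := lpresKernel (↑Q : Set _) ↑R ↑Φ with hN
  set θ : FreeGroup (Fin n) →* K :=
    G.subtype.comp ((e.symm : _ ≃* G).toMonoidHom.comp (QuotientGroup.mk' N)) with hθ
  have hr : θ.range = G := by
    have hsurj : Function.Surjective ((e.symm : _ ≃* G).toMonoidHom.comp (QuotientGroup.mk' N)) :=
      e.symm.surjective.comp (QuotientGroup.mk'_surjective N)
    rw [hθ, MonoidHom.range_comp, MonoidHom.range_eq_top.mpr hsurj]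
    rw [← MonoidHom.range_eq_map]
    exact G.range_subtype
  have hk : θ.ker = N := by
    ext x
    rw [MonoidHom.mem_ker, hθ]
    show (↑(e.symm (QuotientGroup.mk x)) : K) = 1 ↔ x ∈ N
    rw [OneMemClass.coe_eq_one, MulEquiv.map_eq_one_iff, QuotientGroup.eq_one_iff]
  have hcard : Nat.card (K ⧸ G) = G.index := rfl
  let ε : Fin G.index ≃ K ⧸ G := (Finite.equivFinOfCardEq hcard).symm
  refine ⟨n + G.index, LPresAux.Qext G θ ε Q, LPresAux.Rext R, LPresAux.Φext Φ, ⟨?_⟩⟩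
  have hker : (LPresAux.ψ G θ ε).ker =
      lpresKernel (↑(LPresAux.Qext G θ ε Q) : Set _) (↑(LPresAux.Rext (m := G.index) R) : Set _)
        (↑(LPresAux.Φext (m := G.index) Φ) : Set _) :=
    le_antisymm (LPresAux.ker_le G θ ε Q R Φ hr hk) (LPresAux.ker_ge G θ ε Q R Φ hr hk)
  exact ((QuotientGroup.quotientKerEquivOfSurjective _
    (LPresAux.psi_surj G θ ε hr)).symm.trans (QuotientGroup.quotientMulEquivOfEq hker))
end
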